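/- arXiv:1802.07010 — 5 statements merged into one kernel-verified Lean document; each statement's English description precedes it below -/
import Mathlib

section
/- For the survival function of (1/n) log U^n one has: lim_{n→∞} (1/n) log P((1/n) log U^n > x) = 0 for every x ∈ [0, 1−R], and lim_{n→∞} (1/n) log P((1/n) log U^n > x) = −∞ for every x ∈ (1−R, 1). -/
open MeasureTheory ProbabilityTheory Filter Set Topology
open scoped ENNReal

lemma aux_lt_iInf_nat {ι : Type*} [Nonempty ι] (f : ι → ℕ) (k : ℕ) :
    k < ⨅ i, f i ↔ ∀ i, k < f i := by
  constructor
  · intro h i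
    exact h.trans_le (ciInf_le (OrderBot.bddBelow _) i)
  · intro h
    have h1 : ⨅ i, f i ∈ Set.range f := by
      rw [iInf]
      exact Nat.sInf_mem (Set.range_nonempty f)
    obtain ⟨i, hi⟩ := h1
    rw [← hi]; exact h i

lemma aux_log_one_sub_ge {a : ℝ} (h0 : 0 ≤ a) (h2 : a ≤ 1/2) :
    -(2*a) ≤ Real.log (1-a) := by
  have h1 : (0:ℝ) < 1 - a := by linarith
  rw [Real.le_log_iff_exp_le h1]
  have e1 : 1 + 2*a ≤ Real.exp (2*a) := by
    have := Real.add_one_le_exp (2*a); linarith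
  have hmul : Real.exp (-(2*a)) * Real.exp (2*a) = 1 := by
    rw [← Real.exp_add]; simp
  nlinarith [Real.exp_pos (2*a), Real.exp_pos (-(2*a))]

lemma aux_single_tail {Ω : Type*} [MeasurableSpace Ω] (μ : Measure Ω) (q n : ℕ)
    (X : Ω → ℕ) (hmeas : Measurable X)
    (hval : ∀ ω, X ω ∈ Finset.Icc 1 (q^n))
    (hunif : ∀ k ∈ Finset.Icc 1 (q^n), μ {ω | X ω = k} = ((q:ℝ≥0∞)^n)⁻¹)
    (k : ℕ) :
    μ {ω | k < X ω} = ((q^n - k : ℕ) : ℝ≥0∞) * ((q:ℝ≥0∞)^n)⁻¹ := by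
  have hset : {ω | k < X ω} = ⋃ j ∈ Finset.Ioc k (q^n), {ω | X ω = j} := by
    ext ω
    simp only [Set.mem_setOf_eq, Set.mem_iUnion, Finset.mem_Ioc, exists_prop]
    constructor
    · intro h
      exact ⟨X ω, ⟨h, (Finset.mem_Icc.1 (hval ω)).2⟩, rfl⟩
    · rintro ⟨j, ⟨hj, _⟩, rfl⟩
      exact hj
  rw [hset, measure_biUnion_finset ?_ ?_]
  · have hc : ∀ j ∈ Finset.Ioc k (q^n), μ {ω | X ω = j} = ((q:ℝ≥0∞)^n)⁻¹ := by
      intro j hj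
      rw [Finset.mem_Ioc] at hj
      exact hunif j (Finset.mem_Icc.2 ⟨by omega, hj.2⟩)
    rw [Finset.sum_congr rfl hc, Finset.sum_const, Nat.card_Ioc, nsmul_eq_mul]
  · intro i _ j _ hij
    simp only [Function.onFun, Set.disjoint_left, Set.mem_setOf_eq]
    intro ω h1 h2
    exact hij (h1 ▸ h2 ▸ rfl)
  · intro j _
    exact hmeas (MeasurableSpace.measurableSet_top (s := {j}))

/-- `(1/n)·log_q` of a sequence of probabilities (or expectations), valued in the
extended reals so that `log 0 = ⊥`. -/
noncomputable def rateSeq (q : ℕ) (p : ℕ → ℝ≥0∞) (n : ℕ) : EReal :=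
  ((((n : ℝ) * Real.log q)⁻¹ : ℝ) : EReal) * ENNReal.log (p n)

/-- Survival-function exponents for `(1/n) log_q Uⁿ`:
the exponent is `0` on `[0, 1-R]` and `-∞` on `(1-R, 1)`. -/
theorem grand_min_uniform_survival_exponent
    {Ω : Type*} [MeasurableSpace Ω] (μ : Measure Ω) [IsProbabilityMeasure μ]
    (q : ℕ) (hq : 2 ≤ q) (R : ℝ) (hR : R ∈ Set.Ioo (0:ℝ) 1)
    (M : ℕ → ℕ) (hM : ∀ n : ℕ, M n = ⌊(q : ℝ) ^ ((n : ℝ) * R)⌋₊)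
    (Un : (n : ℕ) → Fin (M n) → Ω → ℕ)
    (hUnmeas : ∀ n i, Measurable (Un n i))
    (hUnval : ∀ n i ω, Un n i ω ∈ Finset.Icc 1 (q ^ n))
    (hUnunif : ∀ n i, ∀ k ∈ Finset.Icc 1 (q ^ n), μ {ω | Un n i ω = k} = ((q : ℝ≥0∞) ^ n)⁻¹)
    (hUnindep : ∀ n, iIndepFun (Un n) μ)
    (U : ℕ → Ω → ℕ) (hU : ∀ n ω, U n ω = ⨅ i, Un n i ω)
    :
    (∀ x ∈ Set.Icc (0:ℝ) (1 - R),
      Filter.Tendsto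
        (rateSeq q (fun n => μ {ω | x < (n : ℝ)⁻¹ * Real.logb q ((U n ω : ℝ))}))
        Filter.atTop (nhds (0 : EReal))) ∧
    (∀ x ∈ Set.Ioo (1 - R) (1:ℝ),
      Filter.Tendsto
        (rateSeq q (fun n => μ {ω | x < (n : ℝ)⁻¹ * Real.logb q ((U n ω : ℝ))}))
        Filter.atTop (nhds (⊥ : EReal))) := by
  have hq1 : (1:ℝ) < q := by exact_mod_cast Nat.lt_of_lt_of_le one_lt_two hq
  have hq0' : (0:ℝ) < q := by linarith
  have hM1 : ∀ n, 1 ≤ M n := by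
    intro n
    rw [hM]
    exact Nat.le_floor (by
      simpa using Real.one_le_rpow hq1.le (mul_nonneg (Nat.cast_nonneg n) hR.1.le))
  have hNE : ∀ n, Nonempty (Fin (M n)) := fun n => ⟨⟨0, hM1 n⟩⟩
  have htail : ∀ n k, μ {ω | k < U n ω}
      = (((q^n - k : ℕ) : ℝ≥0∞) * ((q:ℝ≥0∞)^n)⁻¹)^(M n) := by
    intro n k
    haveI := hNE n
    have hset : {ω | k < U n ω} = ⋂ i, Un n i ⁻¹' Set.Ioi k := by
      ext ω
      simp only [Set.mem_setOf_eq, Set.mem_iInter, hU n ω, Set.mem_preimage, Set.mem_Ioi]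
      exact aux_lt_iInf_nat _ k
    rw [hset, (hUnindep n).meas_iInter
        (fun i => ⟨Set.Ioi k, MeasurableSpace.measurableSet_top, rfl⟩)]
    have hone : ∀ i : Fin (M n), μ (Un n i ⁻¹' Set.Ioi k)
        = ((q^n - k : ℕ) : ℝ≥0∞) * ((q:ℝ≥0∞)^n)⁻¹ :=
      fun i => aux_single_tail μ q n (Un n i) (hUnmeas n i) (hUnval n i) (hUnunif n i) k
    rw [Finset.prod_congr rfl (fun i _ => hone i), Finset.prod_const,
      Finset.card_univ, Fintype.card_fin]
  have hqn0 : ∀ n : ℕ, ((q:ℝ≥0∞)^n) ≠ 0 := fun n =>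
    pow_ne_zero _ (Nat.cast_ne_zero.2 (by omega))
  have hqnt : ∀ n : ℕ, ((q:ℝ≥0∞)^n) ≠ ⊤ := fun n =>
    ENNReal.pow_ne_top (ENNReal.natCast_ne_top q)
  have hrep : ∀ n k, k < q^n →
      ENNReal.log (μ {ω | k < U n ω})
        = (((M n : ℝ) * Real.log (1 - (k:ℝ)/(q:ℝ)^n) : ℝ) : EReal) := by
    intro n k hk
    rw [htail n k]
    set c : ℝ≥0∞ := ((q^n - k : ℕ):ℝ≥0∞) * ((q:ℝ≥0∞)^n)⁻¹ with hc
    have hc0 : c ≠ 0 :=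
      mul_ne_zero (Nat.cast_ne_zero.2 (by omega)) (ENNReal.inv_ne_zero.2 (hqnt n))
    have hct : c ≠ ⊤ :=
      ENNReal.mul_ne_top (ENNReal.natCast_ne_top _) (ENNReal.inv_ne_top.2 (hqn0 n))
    rw [ENNReal.log_pos_real (pow_ne_zero _ hc0) (ENNReal.pow_ne_top hct)]
    have hkr : (k:ℝ) ≤ (q:ℝ)^n := by exact_mod_cast hk.le
    have htr : (c ^ (M n)).toReal = (1 - (k:ℝ)/(q:ℝ)^n)^(M n) := by
      have h1 : ((q^n - k : ℕ):ℝ≥0∞).toReal = (q:ℝ)^n - k := by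
        rw [ENNReal.toReal_natCast]
        push_cast [Nat.cast_sub hk.le]
        ring
      have h2 : (((q:ℝ≥0∞)^n)⁻¹).toReal = ((q:ℝ)^n)⁻¹ := by
        rw [ENNReal.toReal_inv, ENNReal.toReal_pow, ENNReal.toReal_natCast]
      have hqpos : (0:ℝ) < (q:ℝ)^n := by positivity
      rw [ENNReal.toReal_pow, hc, ENNReal.toReal_mul, h1, h2]
      congr 1
      field_simp
    rw [htr, Real.log_pow]
  have hU1 : ∀ n ω, 1 ≤ U n ω := by
    intro n ω
    haveI := hNE n
    rw [hU]
    exact (aux_lt_iInf_nat (fun i => Un n i ω) 0).2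
      (fun i => (Finset.mem_Icc.1 (hUnval n i ω)).1)
  have hevset : ∀ (x:ℝ), 0 ≤ x → ∀ n:ℕ, 1 ≤ n →
      {ω | x < (n:ℝ)⁻¹ * Real.logb q ((U n ω : ℝ))}
        = {ω | ⌊(q:ℝ)^((n:ℝ)*x)⌋₊ < U n ω} := by
    intro x hx n hn
    ext ω
    have hn0 : (0:ℝ) < n := by exact_mod_cast hn
    have hu0 : (0:ℝ) < (U n ω : ℝ) := by exact_mod_cast hU1 n ω
    simp only [Set.mem_setOf_eq]
    rw [inv_mul_eq_div, lt_div_iff₀ hn0, Real.lt_logb_iff_rpow_lt hq1 hu0,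
      mul_comm x (n:ℝ)]
    exact (Nat.floor_lt (by positivity)).symm
  have hrate : ∀ (x:ℝ), 0 ≤ x → ∀ n:ℕ, 1 ≤ n → ⌊(q:ℝ)^((n:ℝ)*x)⌋₊ < q^n →
      rateSeq q (fun m => μ {ω | x < (m:ℝ)⁻¹ * Real.logb q ((U m ω : ℝ))}) n
        = ((((n:ℝ) * Real.log q)⁻¹
            * ((M n : ℝ) * Real.log (1 - (⌊(q:ℝ)^((n:ℝ)*x)⌋₊:ℝ)/(q:ℝ)^n)) : ℝ) : EReal) := by
    intro x hx n hn hklt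
    unfold rateSeq
    beta_reduce
    rw [hevset x hx n hn, hrep n _ hklt, ← EReal.coe_mul]
  have hL : 0 < Real.log q := Real.log_pos hq1
  have hgrow : ∀ y : ℝ, 0 < y → ∀ᶠ n:ℕ in atTop, (2:ℝ) ≤ (q:ℝ)^((n:ℝ)*y) := by
    intro y hy
    have heq : ∀ n:ℕ, Real.exp ((Real.log q * y) * (n:ℝ)) = (q:ℝ)^((n:ℝ)*y) := by
      intro n; rw [Real.rpow_def_of_pos hq0']; ring_nf
    have ht : Tendsto (fun n:ℕ => (q:ℝ)^((n:ℝ)*y)) atTop atTop :=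
      Tendsto.congr heq
        (Real.tendsto_exp_atTop.comp
          (tendsto_natCast_atTop_atTop.const_mul_atTop (by positivity)))
    exact ht.eventually_ge_atTop 2
  have hklt : ∀ (x:ℝ), x < 1 → ∀ n:ℕ, 1 ≤ n → ⌊(q:ℝ)^((n:ℝ)*x)⌋₊ < q^n := by
    intro x hx1 n hn
    rw [Nat.floor_lt (by positivity)]
    have hcast : ((q^n : ℕ):ℝ) = (q:ℝ)^((n:ℝ)) := by
      rw [Real.rpow_natCast]; push_cast; ring
    rw [hcast]
    apply (Real.rpow_lt_rpow_left_iff hq1).2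
    have hn' : (1:ℝ) ≤ n := by exact_mod_cast hn
    nlinarith
  have part1 : ∀ x ∈ Set.Icc (0:ℝ) (1 - R),
      Filter.Tendsto
        (rateSeq q (fun n => μ {ω | x < (n : ℝ)⁻¹ * Real.logb q ((U n ω : ℝ))}))
        Filter.atTop (nhds (0 : EReal)) := by
    rintro x ⟨hx0, hx1⟩
    have hxlt1 : x < 1 := by nlinarith [hR.1]
    set F : ℕ → ℝ := fun n => ((n:ℝ) * Real.log q)⁻¹
      * ((M n : ℝ) * Real.log (1 - (⌊(q:ℝ)^((n:ℝ)*x)⌋₊:ℝ)/(q:ℝ)^n)) with hF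
    have hbound : ∀ᶠ n:ℕ in atTop,
        -(2 * ((n:ℝ) * Real.log q)⁻¹) ≤ F n ∧ F n ≤ 0 := by
      filter_upwards [eventually_ge_atTop 1, hgrow R hR.1] with n hn h2
      simp only [hF]
      set k := ⌊(q:ℝ)^((n:ℝ)*x)⌋₊ with hk
      set a : ℝ := (k:ℝ)/(q:ℝ)^n with hadef
      have hn0 : (0:ℝ) < n := by exact_mod_cast hn
      have hqpow : (0:ℝ) < (q:ℝ)^n := by positivity
      have ha0 : 0 ≤ a := by positivity
      have hfl : (k:ℝ) ≤ (q:ℝ)^((n:ℝ)*x) := Nat.floor_le (by positivity)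
      have haR : a ≤ ((q:ℝ)^((n:ℝ)*R))⁻¹ := by
        calc a ≤ (q:ℝ)^((n:ℝ)*x) / (q:ℝ)^n := by
                rw [hadef]; gcongr
          _ = (q:ℝ)^((n:ℝ)*x - (n:ℝ)) := by
                rw [← Real.rpow_natCast q n, ← Real.rpow_sub hq0']
          _ ≤ (q:ℝ)^(-((n:ℝ)*R)) := by
                apply (Real.rpow_le_rpow_left_iff hq1).2
                nlinarith
          _ = ((q:ℝ)^((n:ℝ)*R))⁻¹ := by rw [Real.rpow_neg hq0'.le]
      have hnRpos : (0:ℝ) < (q:ℝ)^((n:ℝ)*R) := by positivity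
      have ha2 : a ≤ 1/2 := by
        have hinv : ((q:ℝ)^((n:ℝ)*R))⁻¹ ≤ 1/2 := by
          have h3 : ((q:ℝ)^((n:ℝ)*R))⁻¹ * ((q:ℝ)^((n:ℝ)*R)) = 1 :=
            inv_mul_cancel₀ hnRpos.ne'
          nlinarith [inv_nonneg.2 hnRpos.le]
        linarith
      have hMle : (M n:ℝ) ≤ (q:ℝ)^((n:ℝ)*R) := by
        rw [hM]; exact Nat.floor_le (by positivity)
      have hMa : (M n:ℝ)*a ≤ 1 := by
        have h1 : (M n:ℝ)*a ≤ (q:ℝ)^((n:ℝ)*R) * ((q:ℝ)^((n:ℝ)*R))⁻¹ :=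
          mul_le_mul hMle haR ha0 (by positivity)
        rwa [mul_inv_cancel₀ hnRpos.ne'] at h1
      have hlogub : Real.log (1-a) ≤ 0 := Real.log_nonpos (by linarith) (by linarith)
      have hloglb : -(2*a) ≤ Real.log (1-a) := aux_log_one_sub_ge ha0 ha2
      have hcpos : 0 < ((n:ℝ) * Real.log q)⁻¹ := by positivity
      constructor
      · have h1 : (M n:ℝ) * (-(2*a)) ≤ (M n:ℝ) * Real.log (1-a) :=
          mul_le_mul_of_nonneg_left hloglb (Nat.cast_nonneg _)
        have h2' : -(2:ℝ) ≤ (M n:ℝ) * Real.log (1-a) := by nlinarith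
        have h3 : ((n:ℝ) * Real.log q)⁻¹ * (-2)
            ≤ ((n:ℝ) * Real.log q)⁻¹ * ((M n:ℝ) * Real.log (1-a)) :=
          mul_le_mul_of_nonneg_left h2' hcpos.le
        have h4 : ((n:ℝ) * Real.log q)⁻¹ * (-2)
            = -(2 * ((n:ℝ) * Real.log q)⁻¹) := by ring
        linarith
      · have h1 : (M n:ℝ) * Real.log (1-a) ≤ 0 := by
          have := mul_le_mul_of_nonneg_left hlogub
            (Nat.cast_nonneg (M n) : (0:ℝ) ≤ (M n : ℝ))
          simpa using this
        have h2' := mul_le_mul_of_nonneg_left h1 hcpos.le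
        simpa using h2'
    have hlow : Tendsto (fun n:ℕ => -(2 * ((n:ℝ) * Real.log q)⁻¹)) atTop (nhds 0) := by
      have h1 : Tendsto (fun n:ℕ => (n:ℝ) * Real.log q) atTop atTop :=
        tendsto_natCast_atTop_atTop.atTop_mul_const hL
      have h3 : Tendsto (fun n:ℕ => 2 * ((n:ℝ) * Real.log q)⁻¹) atTop (nhds (2*0)) :=
        h1.inv_tendsto_atTop.const_mul 2
      rw [mul_zero] at h3
      simpa using h3.neg
    have hFt : Tendsto F atTop (nhds 0) :=
      tendsto_of_tendsto_of_tendsto_of_le_of_le' hlow tendsto_const_nhds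
        (hbound.mono fun n h => h.1) (hbound.mono fun n h => h.2)
    have hcoe : Tendsto (fun n => ((F n : ℝ) : EReal)) atTop (nhds ((0:ℝ):EReal)) :=
      EReal.tendsto_coe.2 hFt
    rw [show ((0:ℝ):EReal) = (0:EReal) from rfl] at hcoe
    apply hcoe.congr'
    filter_upwards [eventually_ge_atTop 1] with n hn
    exact (hrate x hx0 n hn (hklt x hxlt1 n hn)).symm
  have part2 : ∀ x ∈ Set.Ioo (1 - R) (1:ℝ),
      Filter.Tendsto
        (rateSeq q (fun n => μ {ω | x < (n : ℝ)⁻¹ * Real.logb q ((U n ω : ℝ))}))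
        Filter.atTop (nhds (⊥ : EReal)) := by
    rintro x ⟨hx1, hx2⟩
    have hx0 : (0:ℝ) < x := by nlinarith [hR.2]
    set ε : ℝ := R + x - 1 with hε
    have hεpos : 0 < ε := by rw [hε]; linarith
    set G : ℕ → ℝ := fun n =>
      Real.exp (Real.log q * (ε * (n:ℝ))) * (4 * ((n:ℝ) * Real.log q))⁻¹ with hG
    have hGt : Tendsto G atTop atTop := by
      have ht : Tendsto (fun n:ℕ => Real.log q * ε * (n:ℝ)) atTop atTop :=
        tendsto_natCast_atTop_atTop.const_mul_atTop (by positivity)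
      have hbase := (Real.tendsto_exp_div_pow_atTop 1).comp ht
      have h2 : Tendsto (fun n:ℕ =>
          (Real.exp (Real.log q * ε * (n:ℝ)) / (Real.log q * ε * (n:ℝ))^1) * (ε/4))
          atTop atTop := hbase.atTop_mul_const (by positivity)
      apply Tendsto.congr' ?_ h2
      filter_upwards [eventually_ge_atTop 1] with n hn
      have hn0 : (0:ℝ) < n := by exact_mod_cast hn
      simp only [pow_one, hG]
      field_simp
    rw [EReal.tendsto_nhds_bot_iff_real]
    intro b
    have hle : ∀ᶠ n:ℕ in atTop,
        rateSeq q (fun n => μ {ω | x < (n : ℝ)⁻¹ * Real.logb q ((U n ω : ℝ))}) n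
          ≤ ((-(G n) : ℝ) : EReal) := by
      filter_upwards [eventually_ge_atTop 1, hgrow R hR.1, hgrow x hx0] with n hn h2R h2x
      rw [hrate x hx0.le n hn (hklt x hx2 n hn), EReal.coe_le_coe_iff]
      set k := ⌊(q:ℝ)^((n:ℝ)*x)⌋₊ with hk
      set a : ℝ := (k:ℝ)/(q:ℝ)^n with hadef
      have hn0 : (0:ℝ) < n := by exact_mod_cast hn
      have hqpow : (0:ℝ) < (q:ℝ)^n := by positivity
      have ha0 : 0 ≤ a := by positivity
      have hcpos : 0 < ((n:ℝ) * Real.log q)⁻¹ := by positivity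
      have hklt' : (k:ℝ) < (q:ℝ)^n := by
        have := hklt x hx2 n hn
        have hcast : ((q^n : ℕ):ℝ) = (q:ℝ)^n := by push_cast; ring
        rw [← hcast]
        exact_mod_cast this
      have ha1 : a < 1 := by rw [hadef, div_lt_one hqpow]; exact hklt'
      have hlog : Real.log (1-a) ≤ -a := by
        have := Real.log_le_sub_one_of_pos (show (0:ℝ) < 1-a by linarith)
        linarith
      have hMge : (q:ℝ)^((n:ℝ)*R) / 2 ≤ (M n:ℝ) := by
        rw [hM]
        have h1 : (q:ℝ)^((n:ℝ)*R) - 1 < (⌊(q:ℝ)^((n:ℝ)*R)⌋₊:ℝ) :=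
          Nat.sub_one_lt_floor _
        linarith
      have hkge : (q:ℝ)^((n:ℝ)*x) / 2 ≤ (k:ℝ) := by
        rw [hk]
        have h1 : (q:ℝ)^((n:ℝ)*x) - 1 < (⌊(q:ℝ)^((n:ℝ)*x)⌋₊:ℝ) :=
          Nat.sub_one_lt_floor _
        linarith
      have hexp : (q:ℝ)^((n:ℝ)*R) * (q:ℝ)^((n:ℝ)*x) / (q:ℝ)^n
          = Real.exp (Real.log q * (ε * (n:ℝ))) := by
        rw [← Real.rpow_natCast q n, ← Real.rpow_add hq0', ← Real.rpow_sub hq0',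
          Real.rpow_def_of_pos hq0']
        congr 1
        rw [hε]; ring
      have hMa_ge : Real.exp (Real.log q * (ε * (n:ℝ))) / 4 ≤ (M n:ℝ) * a := by
        have h1 : ((q:ℝ)^((n:ℝ)*R)/2) * ((q:ℝ)^((n:ℝ)*x)/2) ≤ (M n:ℝ) * (k:ℝ) :=
          mul_le_mul hMge hkge (by positivity) (Nat.cast_nonneg _)
        calc Real.exp (Real.log q * (ε * (n:ℝ))) / 4
            = ((q:ℝ)^((n:ℝ)*R)/2) * ((q:ℝ)^((n:ℝ)*x)/2) / (q:ℝ)^n := by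
              rw [← hexp]; ring
          _ ≤ (M n:ℝ) * (k:ℝ) / (q:ℝ)^n := by gcongr
          _ = (M n:ℝ) * a := by rw [hadef]; ring
      have s1 : (M n:ℝ) * Real.log (1-a) ≤ (M n:ℝ) * (-a) :=
        mul_le_mul_of_nonneg_left hlog (Nat.cast_nonneg _)
      have s2 : ((n:ℝ) * Real.log q)⁻¹ * ((M n:ℝ) * Real.log (1-a))
          ≤ ((n:ℝ) * Real.log q)⁻¹ * ((M n:ℝ) * (-a)) :=
        mul_le_mul_of_nonneg_left s1 hcpos.le
      have s3 : ((n:ℝ) * Real.log q)⁻¹ * (Real.exp (Real.log q * (ε * (n:ℝ))) / 4)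
          ≤ ((n:ℝ) * Real.log q)⁻¹ * ((M n:ℝ) * a) :=
        mul_le_mul_of_nonneg_left hMa_ge hcpos.le
      have s4 : G n = ((n:ℝ) * Real.log q)⁻¹
          * (Real.exp (Real.log q * (ε * (n:ℝ))) / 4) := by
        rw [hG]
        field_simp
      have e1 : ((n:ℝ) * Real.log q)⁻¹ * ((M n:ℝ) * (-a))
          = -(((n:ℝ) * Real.log q)⁻¹ * ((M n:ℝ) * a)) := by ring
      linarith
    have hGlt : ∀ᶠ n:ℕ in atTop, -(G n) < b := by
      filter_upwards [hGt.eventually_gt_atTop (-b)] with n hn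
      linarith
    filter_upwards [hle, hGlt] with n h1 h2
    exact lt_of_le_of_lt h1 (EReal.coe_lt_coe_iff.2 h2)
  exact ⟨part1, part2⟩
end

section
/- The sequence {(1/n) log U^n} satisfies the large deviation principle with rate function I^U: for every x ∈ [0,1], lim_{ε↓0} liminf_{n→∞} (1/n) log P((1/n) log U^n ∈ (x−ε, x+ε)) = lim_{ε↓0} limsup_{n→∞} (1/n) log P((1/n) log U^n ∈ (x−ε, x+ε)) = −I^U(x), where I^U(x) = 1 − R − x for x ∈ [0, 1−R] and I^U(x) = +∞ for x ∈ (1−R, 1]. -/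
open MeasureTheory ProbabilityTheory Filter Set Topology
open scoped ENNReal

/-- The rate function `I^U` for guessing a non-transmitted code-word:
`I^U(x) = 1 - R - x` on `[0, 1-R]` and `+∞` beyond. -/
noncomputable def IU (R : ℝ) (x : ℝ) : EReal :=
  if x ≤ 1 - R then ((1 - R - x : ℝ) : EReal) else ⊤

lemma tail_single {Ω : Type*} [MeasurableSpace Ω] (μ : Measure Ω)
    (q n : ℕ) (X : Ω → ℕ) (hmeas : Measurable X)
    (hval : ∀ ω, X ω ∈ Finset.Icc 1 (q ^ n))
    (hunif : ∀ k ∈ Finset.Icc 1 (q ^ n), μ {ω | X ω = k} = ((q : ℝ≥0∞) ^ n)⁻¹)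
    (k : ℕ) :
    μ {ω | k < X ω} = ((q ^ n - k : ℕ) : ℝ≥0∞) * ((q : ℝ≥0∞) ^ n)⁻¹ := by
  have hset : {ω | k < X ω} = ⋃ j ∈ Finset.Ioc k (q ^ n), {ω | X ω = j} := by
    ext ω
    simp only [mem_setOf_eq, mem_iUnion, Finset.mem_Ioc, exists_prop]
    constructor
    · intro h
      exact ⟨X ω, ⟨h, (Finset.mem_Icc.1 (hval ω)).2⟩, rfl⟩
    · rintro ⟨j, ⟨hj1, _⟩, hj⟩
      omega
  rw [hset, measure_biUnion_finset]
  · have hmem : ∀ j ∈ Finset.Ioc k (q ^ n), μ {ω | X ω = j} = ((q : ℝ≥0∞) ^ n)⁻¹ := by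
      intro j hj
      rw [Finset.mem_Ioc] at hj
      exact hunif j (Finset.mem_Icc.2 (by omega))
    rw [Finset.sum_congr rfl hmem, Finset.sum_const, Nat.card_Ioc, nsmul_eq_mul]
  · intro i _ j _ hij
    simp only [Function.onFun]
    apply Set.disjoint_left.2
    intro ω h1 h2
    simp only [mem_setOf_eq] at h1 h2
    exact hij (h1 ▸ h2 ▸ rfl)
  · intro j _
    exact hmeas (measurableSet_singleton j)

lemma tail_min {Ω : Type*} [MeasurableSpace Ω] (μ : Measure Ω)
    (q n m : ℕ) (Un : Fin m → Ω → ℕ)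
    (hmeas : ∀ i, Measurable (Un i))
    (hval : ∀ i ω, Un i ω ∈ Finset.Icc 1 (q ^ n))
    (hunif : ∀ i, ∀ k ∈ Finset.Icc 1 (q ^ n), μ {ω | Un i ω = k} = ((q : ℝ≥0∞) ^ n)⁻¹)
    (hindep : iIndepFun Un μ) (k : ℕ) :
    μ {ω | ∀ i, k < Un i ω} =
      (((q ^ n - k : ℕ) : ℝ≥0∞) * ((q : ℝ≥0∞) ^ n)⁻¹) ^ m := by
  have hset : {ω | ∀ i, k < Un i ω} = ⋂ i, Un i ⁻¹' (Set.Ioi k) := by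
    ext ω; simp [Set.mem_iInter]
  rw [hset, hindep.meas_iInter (fun i => ⟨Set.Ioi k, measurableSet_Ioi, rfl⟩)]
  have : ∀ i, μ (Un i ⁻¹' (Set.Ioi k)) = ((q ^ n - k : ℕ) : ℝ≥0∞) * ((q : ℝ≥0∞) ^ n)⁻¹ := by
    intro i
    have : Un i ⁻¹' (Set.Ioi k) = {ω | k < Un i ω} := rfl
    rw [this, tail_single μ q n (Un i) (hmeas i) (hval i) (hunif i) k]
  rw [Finset.prod_congr rfl (fun i _ => this i), Finset.prod_const, Finset.card_univ,
    Fintype.card_fin]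

lemma prob_eq {Ω : Type*} [MeasurableSpace Ω] (μ : Measure Ω) [IsProbabilityMeasure μ]
    (q n m : ℕ) (hq : 2 ≤ q) (hn : 1 ≤ n) (hm : 1 ≤ m)
    (Un : Fin m → Ω → ℕ)
    (hmeas : ∀ i, Measurable (Un i))
    (hval : ∀ i ω, Un i ω ∈ Finset.Icc 1 (q ^ n))
    (hunif : ∀ i, ∀ k ∈ Finset.Icc 1 (q ^ n), μ {ω | Un i ω = k} = ((q : ℝ≥0∞) ^ n)⁻¹)
    (hindep : iIndepFun Un μ)
    (U : Ω → ℕ) (hU : ∀ ω, U ω = ⨅ i, Un i ω)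
    (y z : ℝ) (hyz : y < z) :
    μ {ω | (n : ℝ)⁻¹ * Real.logb q ((U ω : ℝ)) ∈ Set.Ioo y z} =
      ENNReal.ofReal
        ((((q ^ n - ⌊(q:ℝ) ^ ((n:ℝ) * y)⌋₊ : ℕ) : ℝ) / ((q ^ n : ℕ) : ℝ)) ^ m -
         (((q ^ n - (⌈(q:ℝ) ^ ((n:ℝ) * z)⌉₊ - 1) : ℕ) : ℝ) / ((q ^ n : ℕ) : ℝ)) ^ m) := by
  have hq1 : (1:ℝ) < q := by exact_mod_cast Nat.lt_of_lt_of_le Nat.one_lt_two hq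
  have hq0 : (0:ℝ) < q := by linarith
  set a : ℝ := (q:ℝ) ^ ((n:ℝ) * y) with ha_def
  set b : ℝ := (q:ℝ) ^ ((n:ℝ) * z) with hb_def
  have ha : 0 < a := Real.rpow_pos_of_pos hq0 _
  have hb : 0 < b := Real.rpow_pos_of_pos hq0 _
  have hab : a < b := by
    apply Real.rpow_lt_rpow_of_exponent_lt hq1
    have : (0:ℝ) < n := by exact_mod_cast hn
    nlinarith
  set A : ℕ := ⌊a⌋₊ with hA_def
  set C : ℕ := ⌈b⌉₊ with hC_def
  have hC1 : 1 ≤ C := Nat.one_le_iff_ne_zero.2 (by positivity)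
  have hAC : A < C := by
    have h1 : (A:ℝ) ≤ a := Nat.floor_le ha.le
    have h2 : b ≤ (C:ℝ) := Nat.le_ceil b
    exact_mod_cast h1.trans_lt (hab.trans_le h2)
  -- set equality
  have hsetEq : {ω | (n : ℝ)⁻¹ * Real.logb q ((U ω : ℝ)) ∈ Set.Ioo y z} =
      {ω | ∀ i, A < Un i ω} \ {ω | ∀ i, C - 1 < Un i ω} := by
    ext ω
    have hle : ∀ i, U ω ≤ Un i ω := by
      intro i
      rw [hU ω]
      exact ciInf_le (OrderBot.bddBelow _) i
    have : Nonempty (Fin m) := ⟨⟨0, hm⟩⟩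
    have hex : ∃ i, Un i ω = U ω := by
      rw [hU ω]
      have h := Nat.sInf_mem (Set.range_nonempty (fun i => Un i ω))
      rw [sInf_range] at h
      exact h
    obtain ⟨i0, hi0⟩ := hex
    have hU1 : 1 ≤ U ω := by
      have := (Finset.mem_Icc.1 (hval i0 ω)).1
      omega
    have hUr : (0:ℝ) < (U ω : ℝ) := by exact_mod_cast hU1
    have hnpos : (0:ℝ) < (n:ℝ) := by exact_mod_cast hn
    simp only [Set.mem_setOf_eq, Set.mem_Ioo, Set.mem_diff]
    have key : (y < (n : ℝ)⁻¹ * Real.logb q ((U ω : ℝ)) ∧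
        (n : ℝ)⁻¹ * Real.logb q ((U ω : ℝ)) < z) ↔ (a < (U ω : ℝ) ∧ (U ω : ℝ) < b) := by
      rw [inv_mul_eq_div, lt_div_iff₀ hnpos, div_lt_iff₀ hnpos,
        mul_comm y, mul_comm z,
        Real.lt_logb_iff_rpow_lt hq1 hUr, Real.logb_lt_iff_lt_rpow hq1 hUr]
    rw [key]
    have k1 : a < (U ω : ℝ) ↔ A < U ω := (Nat.floor_lt ha.le).symm
    have k2 : (U ω : ℝ) < b ↔ U ω < C := Nat.lt_ceil.symm
    rw [k1, k2]
    constructor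
    · rintro ⟨h1, h2⟩
      refine ⟨fun i => lt_of_lt_of_le h1 (hle i), ?_⟩
      intro hall
      have := hall i0
      omega
    · rintro ⟨h1, h2⟩
      constructor
      · rw [← hi0]; exact h1 i0
      · push_neg at h2
        obtain ⟨i, hi⟩ := h2
        have := hle i
        omega
  rw [hsetEq]
  have hTmeas : ∀ t : ℕ, MeasurableSet {ω | ∀ i, t < Un i ω} := by
    intro t
    have : {ω | ∀ i, t < Un i ω} = ⋂ i, Un i ⁻¹' (Set.Ioi t) := by
      ext ω; simp [Set.mem_iInter]
    rw [this]
    exact MeasurableSet.iInter (fun i => (hmeas i) measurableSet_Ioi)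
  have hsub : {ω | ∀ i, C - 1 < Un i ω} ⊆ {ω | ∀ i, A < Un i ω} := by
    intro ω h i
    have := h i
    omega
  rw [measure_diff hsub (hTmeas _).nullMeasurableSet (measure_ne_top μ _),
    tail_min μ q n m Un hmeas hval hunif hindep,
    tail_min μ q n m Un hmeas hval hunif hindep]
  have hqn : (0:ℝ) < ((q ^ n : ℕ) : ℝ) := by positivity
  have hcc : ∀ t : ℕ, (((q ^ n - t : ℕ) : ℝ≥0∞) * ((q : ℝ≥0∞) ^ n)⁻¹) ^ m =
      ENNReal.ofReal ((((q ^ n - t : ℕ) : ℝ) / ((q ^ n : ℕ) : ℝ)) ^ m) := by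
    intro t
    rw [ENNReal.ofReal_pow (by positivity), div_eq_mul_inv, ENNReal.ofReal_mul (by positivity),
      ENNReal.ofReal_inv_of_pos hqn, ENNReal.ofReal_natCast, ENNReal.ofReal_natCast]
    norm_cast
  rw [hcc, hcc, ← ENNReal.ofReal_sub _ (by positivity)]

lemma aux_rate_le (c D r : ℝ) (hc : 0 < c) (hr : 0 < r) (hD : D ≤ r) :
    (c : EReal) * ENNReal.log (ENNReal.ofReal D) ≤ ((c * Real.log r : ℝ) : EReal) := by
  rcases le_or_gt D 0 with h | h
  · rw [ENNReal.ofReal_eq_zero.2 h, ENNReal.log_zero, EReal.coe_mul_bot_of_pos hc]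
    exact bot_le
  · rw [ENNReal.log_ofReal_of_pos h, ← EReal.coe_mul, EReal.coe_le_coe_iff]
    exact mul_le_mul_of_nonneg_left (Real.log_le_log h hD) hc.le

lemma aux_rate_ge (c D r : ℝ) (hc : 0 < c) (hr : 0 < r) (hD : r ≤ D) :
    ((c * Real.log r : ℝ) : EReal) ≤ (c : EReal) * ENNReal.log (ENNReal.ofReal D) := by
  rw [ENNReal.log_ofReal_of_pos (hr.trans_le hD), ← EReal.coe_mul, EReal.coe_le_coe_iff]
  exact mul_le_mul_of_nonneg_left (Real.log_le_log hr hD) hc.le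

lemma aux_outer_squeeze (v δ : ℝ) (hδ : 0 < δ) (L : ℝ → EReal)
    (h : ∀ ε ∈ Ioo (0:ℝ) δ, ((v - ε : ℝ) : EReal) ≤ L ε ∧ L ε ≤ ((v + ε : ℝ) : EReal)) :
    Tendsto L (nhdsWithin 0 (Set.Ioi 0)) (nhds ((v : ℝ) : EReal)) := by
  have hmem : Ioo (0:ℝ) δ ∈ nhdsWithin 0 (Set.Ioi 0) := Ioo_mem_nhdsGT_of_mem (by simp [hδ])
  have hid : Tendsto (fun ε : ℝ => ε) (nhdsWithin 0 (Set.Ioi 0)) (nhds 0) :=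
    tendsto_id.mono_left nhdsWithin_le_nhds
  have h1 : Tendsto (fun ε : ℝ => ((v - ε : ℝ) : EReal)) (nhdsWithin 0 (Set.Ioi 0))
      (nhds ((v : ℝ) : EReal)) := by
    have : Tendsto (fun ε : ℝ => v - ε) (nhdsWithin 0 (Set.Ioi 0)) (nhds v) := by
      simpa using (tendsto_const_nhds.sub hid)
    exact (continuous_coe_real_ereal.tendsto v).comp this
  have h2 : Tendsto (fun ε : ℝ => ((v + ε : ℝ) : EReal)) (nhdsWithin 0 (Set.Ioi 0))
      (nhds ((v : ℝ) : EReal)) := by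
    have : Tendsto (fun ε : ℝ => v + ε) (nhdsWithin 0 (Set.Ioi 0)) (nhds v) := by
      simpa using (tendsto_const_nhds.add hid)
    exact (continuous_coe_real_ereal.tendsto v).comp this
  refine tendsto_of_tendsto_of_tendsto_of_le_of_le' h1 h2 ?_ ?_
  · filter_upwards [hmem] with ε hε using (h ε hε).1
  · filter_upwards [hmem] with ε hε using (h ε hε).2

lemma aux_coe_atBot {f : ℕ → ℝ} (h : Tendsto f atTop atBot) :
    Tendsto (fun n => ((f n : ℝ) : EReal)) atTop (nhds (⊥ : EReal)) := by
  rw [EReal.tendsto_nhds_bot_iff_real]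
  intro x
  filter_upwards [h.eventually (eventually_lt_atBot x)] with n hn
  exact_mod_cast hn

-- geom sum bounds
lemma pow_sub_pow_lb {s t : ℝ} (hs : 0 ≤ s) (hst : s ≤ t) (ht : t ≤ 1) (m : ℕ) :
    (m:ℝ) * (t - s) * s ^ m ≤ t ^ m - s ^ m := by
  have key := geom_sum₂_mul t s m
  rw [← key]
  have hterm : ∀ i ∈ Finset.range m, s ^ m ≤ t ^ i * s ^ (m - 1 - i) := by
    intro i hi
    have him : i ≤ m - 1 := Nat.le_sub_one_of_lt (Finset.mem_range.1 hi)
    have : s ^ m ≤ s ^ (m - 1) := pow_le_pow_of_le_one hs (hst.trans ht) (Nat.sub_le m 1)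
    calc s ^ m ≤ s ^ (m-1) := this
      _ = s ^ i * s ^ (m - 1 - i) := by rw [← pow_add]; congr 1; omega
      _ ≤ t ^ i * s ^ (m - 1 - i) := by
          gcongr
  calc (m:ℝ) * (t - s) * s ^ m = ((Finset.range m).card : ℝ) * s ^ m * (t - s) := by
        rw [Finset.card_range]; ring
    _ ≤ (∑ i ∈ Finset.range m, t ^ i * s ^ (m - 1 - i)) * (t - s) := by
        apply mul_le_mul_of_nonneg_right _ (by linarith)
        calc ((Finset.range m).card : ℝ) * s ^ m = ∑ _i ∈ Finset.range m, s ^ m := by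
              rw [Finset.sum_const, nsmul_eq_mul]
          _ ≤ _ := Finset.sum_le_sum hterm

lemma pow_sub_pow_ub {s t : ℝ} (hs : 0 ≤ s) (hst : s ≤ t) (ht : t ≤ 1) (m : ℕ) :
    t ^ m - s ^ m ≤ (m:ℝ) * (t - s) := by
  have key := geom_sum₂_mul t s m
  rw [← key]
  have hterm : ∀ i ∈ Finset.range m, t ^ i * s ^ (m - 1 - i) ≤ 1 := by
    intro i _
    have h1 : t ^ i ≤ 1 := pow_le_one₀ (hs.trans hst) ht
    have h2 : s ^ (m-1-i) ≤ 1 := pow_le_one₀ hs (hst.trans ht)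
    calc t ^ i * s ^ (m-1-i) ≤ 1 * 1 := by
          apply mul_le_mul h1 h2 (pow_nonneg hs _) zero_le_one
      _ = 1 := by ring
  apply mul_le_mul_of_nonneg_right _ (by linarith)
  calc (∑ i ∈ Finset.range m, t ^ i * s ^ (m - 1 - i)) ≤ ∑ _i ∈ Finset.range m, (1:ℝ) :=
        Finset.sum_le_sum hterm
    _ = m := by simp

lemma lin_atTop {c : ℝ} (hc : 0 < c) : Tendsto (fun n : ℕ => (n:ℝ) * c) atTop atTop :=
  tendsto_natCast_atTop_atTop.atTop_mul_const hc

lemma grow_atTop {b c : ℝ} (hb : 1 < b) (hc : 0 < c) :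
    Tendsto (fun n : ℕ => b ^ ((n:ℝ) * c)) atTop atTop := by
  have hb0 : 0 < b := by linarith
  have hlog : 0 < Real.log b := Real.log_pos hb
  have h : Tendsto (fun n : ℕ => Real.exp (Real.log b * ((n:ℝ) * c))) atTop atTop :=
    Real.tendsto_exp_atTop.comp (by
      have : Tendsto (fun n : ℕ => (n:ℝ) * (c * Real.log b)) atTop atTop :=
        lin_atTop (by positivity)
      refine this.congr (fun n => by ring))
  refine h.congr (fun n => ?_)
  rw [← Real.rpow_def_of_pos hb0]

lemma decay_zero {b c : ℝ} (hb : 1 < b) (hc : c < 0) :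
    Tendsto (fun n : ℕ => b ^ ((n:ℝ) * c)) atTop (nhds 0) := by
  have hb0 : 0 < b := by linarith
  have hlog : 0 < Real.log b := Real.log_pos hb
  have hlin : Tendsto (fun n : ℕ => Real.log b * ((n:ℝ) * c)) atTop atBot := by
    have h1 : Tendsto (fun n : ℕ => (n:ℝ) * (-(c * Real.log b))) atTop atTop :=
      lin_atTop (by nlinarith)
    have := tendsto_neg_atTop_atBot.comp h1
    refine this.congr (fun n => by simp; ring)
  have h : Tendsto (fun n : ℕ => Real.exp (Real.log b * ((n:ℝ) * c))) atTop (nhds 0) :=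
    Real.tendsto_exp_atBot.comp hlin
  refine h.congr (fun n => ?_)
  rw [← Real.rpow_def_of_pos hb0]

-- exp growth beats linear, in the division form we need
lemma exp_beats_lin {b θ L : ℝ} (hb : 1 < b) (hθ : 0 < θ) (hL : 0 < L) :
    Tendsto (fun n : ℕ => b ^ ((n:ℝ) * θ) / ((n:ℝ) * L)) atTop atTop := by
  have hb0 : 0 < b := by linarith
  have hlog : 0 < Real.log b := Real.log_pos hb
  have hz : Tendsto (fun n : ℕ => (n:ℝ) * (θ * Real.log b)) atTop atTop :=
    lin_atTop (by positivity)
  have hcomp : Tendsto (fun n : ℕ =>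
      Real.exp ((n:ℝ) * (θ * Real.log b)) / ((n:ℝ) * (θ * Real.log b)) ^ 1) atTop atTop :=
    (Real.tendsto_exp_div_pow_atTop 1).comp hz
  have hmul : Tendsto (fun n : ℕ =>
      Real.exp ((n:ℝ) * (θ * Real.log b)) / ((n:ℝ) * (θ * Real.log b)) ^ 1 *
        (θ * Real.log b / L)) atTop atTop :=
    hcomp.atTop_mul_const (by positivity)
  refine (tendsto_congr' ?_).1 hmul
  filter_upwards [eventually_ge_atTop 1] with n hn
  have hn0 : (0:ℝ) < (n:ℝ) := by exact_mod_cast hn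
  rw [Real.rpow_def_of_pos hb0]
  rw [pow_one]
  field_simp


section CaseA
variable {Ω : Type*} [MeasurableSpace Ω] (μ : Measure Ω) [IsProbabilityMeasure μ]
    (q : ℕ) (hq : 2 ≤ q) (R : ℝ) (hR : R ∈ Set.Ioo (0:ℝ) 1)
    (M : ℕ → ℕ) (hM : ∀ n : ℕ, M n = ⌊(q : ℝ) ^ ((n : ℝ) * R)⌋₊)
    (Un : (n : ℕ) → Fin (M n) → Ω → ℕ)
    (hUnmeas : ∀ n i, Measurable (Un n i))
    (hUnval : ∀ n i ω, Un n i ω ∈ Finset.Icc 1 (q ^ n))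
    (hUnunif : ∀ n i, ∀ k ∈ Finset.Icc 1 (q ^ n), μ {ω | Un n i ω = k} = ((q : ℝ≥0∞) ^ n)⁻¹)
    (hUnindep : ∀ n, iIndepFun (Un n) μ)
    (U : ℕ → Ω → ℕ) (hU : ∀ n ω, U n ω = ⨅ i, Un n i ω)

include hq hR hM in
lemma hM_one (n : ℕ) : 1 ≤ M n := by
  have hq1 : (1:ℝ) ≤ q := by exact_mod_cast Nat.one_le_of_lt hq
  rw [hM]
  exact Nat.le_floor (by simpa using Real.one_le_rpow hq1 (mul_nonneg (Nat.cast_nonneg n) hR.1.le))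

set_option maxHeartbeats 1000000 in
include hq hR hM hUnmeas hUnval hUnunif hUnindep hU in
lemma caseA (x ε : ℝ) (hx0 : 0 ≤ x) (hxlt : x < 1 - R) (hε : 0 < ε)
    (hεδ : ε < (1 - R - x) / 2) :
    ((R + x - 1 - ε : ℝ) : EReal) ≤
      Filter.liminf
        (rateSeq q (fun n =>
          μ {ω | (n : ℝ)⁻¹ * Real.logb q ((U n ω : ℝ)) ∈ Set.Ioo (x - ε) (x + ε)}))
        Filter.atTop ∧
    Filter.limsup
        (rateSeq q (fun n =>
          μ {ω | (n : ℝ)⁻¹ * Real.logb q ((U n ω : ℝ)) ∈ Set.Ioo (x - ε) (x + ε)}))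
        Filter.atTop ≤ ((R + x - 1 + ε : ℝ) : EReal) := by
  have hR0 := hR.1
  have hR1 := hR.2
  have hq1 : (1:ℝ) < q := by exact_mod_cast hq.trans_lt' Nat.one_lt_two
  have hq0 : (0:ℝ) < q := by linarith
  have hL : 0 < Real.log q := Real.log_pos hq1
  set y : ℝ := x - ε with hy_def
  set z : ℝ := x + ε with hz_def
  have hyz : y < z := by simp only [hy_def, hz_def]; linarith
  have hz1 : z < 1 := by simp only [hz_def]; linarith
  have hz0 : 0 < z := by simp only [hz_def]; linarith
  set c1 : ℝ := R + y - 1 with hc1_def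
  set c2 : ℝ := R + z - 1 with hc2_def
  have hc2neg : c2 < 0 := by simp only [hc2_def, hz_def]; linarith
  set a : ℕ → ℝ := fun n => (q:ℝ) ^ ((n:ℝ) * y) with ha_def
  set b : ℕ → ℝ := fun n => (q:ℝ) ^ ((n:ℝ) * z) with hb_def
  set A : ℕ → ℕ := fun n => ⌊a n⌋₊ with hA_def
  set C : ℕ → ℕ := fun n => ⌈b n⌉₊ with hC_def
  set N : ℕ → ℝ := fun n => ((q ^ n : ℕ) : ℝ) with hN_def
  set D : ℕ → ℝ := fun n =>
    (((q ^ n - A n : ℕ) : ℝ) / N n) ^ (M n) - (((q ^ n - (C n - 1) : ℕ) : ℝ) / N n) ^ (M n)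
    with hD_def
  have hpe : ∀ n : ℕ, 1 ≤ n →
      μ {ω | (n : ℝ)⁻¹ * Real.logb q ((U n ω : ℝ)) ∈ Set.Ioo (x - ε) (x + ε)} =
        ENNReal.ofReal (D n) := by
    intro n hn
    exact prob_eq μ q n (M n) hq hn (hM_one q hq R hR M hM n) (Un n) (hUnmeas n)
      (fun i ω => hUnval n i ω) (hUnunif n) (hUnindep n) (U n) (hU n) y z hyz
  -- growth facts
  have hgrow_b : Filter.Tendsto b Filter.atTop Filter.atTop := grow_atTop hq1 hz0
  have hdec_2e : Filter.Tendsto (fun n : ℕ => (q:ℝ) ^ ((n:ℝ) * (-(2*ε)))) Filter.atTop (nhds 0) :=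
    decay_zero hq1 (by linarith)
  have hdec_c2 : Filter.Tendsto (fun n : ℕ => (q:ℝ) ^ ((n:ℝ) * c2)) Filter.atTop (nhds 0) :=
    decay_zero hq1 hc2neg
  have hgrow_R : Filter.Tendsto (fun n : ℕ => (q:ℝ) ^ ((n:ℝ) * R)) Filter.atTop Filter.atTop :=
    grow_atTop hq1 hR0
  have e1 : ∀ᶠ n : ℕ in Filter.atTop, 1 ≤ n := Filter.eventually_ge_atTop 1
  have e2 : ∀ᶠ n : ℕ in Filter.atTop, (q:ℝ) ^ ((n:ℝ) * c2) ≤ 1/2 :=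
    hdec_c2.eventually_le_const (by norm_num)
  have e3 : ∀ᶠ n : ℕ in Filter.atTop, 2 ≤ (q:ℝ) ^ ((n:ℝ) * R) := hgrow_R.eventually_ge_atTop 2
  have e4 : ∀ᶠ n : ℕ in Filter.atTop, (q:ℝ) ^ ((n:ℝ) * (-(2*ε))) ≤ 1/4 :=
    hdec_2e.eventually_le_const (by norm_num)
  have e5 : ∀ᶠ n : ℕ in Filter.atTop, 2 ≤ b n := hgrow_b.eventually_ge_atTop 2
  have hDbound : ∀ᶠ n : ℕ in Filter.atTop,
      (q:ℝ) ^ ((n:ℝ) * c1) / 4 ≤ D n ∧ D n ≤ (q:ℝ) ^ ((n:ℝ) * c2) := by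
    filter_upwards [e1, e2, e3, e4, e5] with n hn1 hn2 hn3 hn4 hn5
    have hn0 : (0:ℝ) < (n:ℝ) := by exact_mod_cast hn1
    have hqnpos : 0 < q ^ n := pow_pos (by omega) n
    have hNpos : 0 < N n := by simp only [hN_def]; exact_mod_cast hqnpos
    have hNrpow : N n = (q:ℝ) ^ ((n:ℝ) * 1) := by
      rw [mul_one, Real.rpow_natCast, hN_def]
      push_cast
      ring
    have ha_pos : 0 < a n := Real.rpow_pos_of_pos hq0 _
    have hb_pos : 0 < b n := Real.rpow_pos_of_pos hq0 _
    have hab : a n < b n := Real.rpow_lt_rpow_of_exponent_lt hq1 (mul_lt_mul_of_pos_left hyz hn0)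
    have haA : (A n : ℝ) ≤ a n := Nat.floor_le ha_pos.le
    have hbC : b n ≤ (C n : ℝ) := Nat.le_ceil _
    have hCb : (C n : ℝ) ≤ b n + 1 := (Nat.ceil_lt_add_one hb_pos.le).le
    have hC1 : 1 ≤ C n := Nat.ceil_pos.2 hb_pos
    have hbN : b n ≤ N n := by
      rw [hNrpow]
      exact Real.rpow_le_rpow_of_exponent_le hq1.le
        (mul_le_mul_of_nonneg_left hz1.le hn0.le)
    have hCqn : C n ≤ q ^ n := Nat.ceil_le.2 (by exact_mod_cast hbN)
    have hACr : (A n : ℝ) < (C n : ℝ) := lt_of_le_of_lt haA (lt_of_lt_of_le hab hbC)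
    have hAC : A n < C n := by exact_mod_cast hACr
    have hAC1 : A n ≤ C n - 1 := by omega
    have hAq : A n ≤ q ^ n := le_trans (by omega) hCqn
    have hCq1 : C n - 1 ≤ q ^ n := le_trans (by omega) hCqn
    have hcast1 : ((q ^ n - A n : ℕ) : ℝ) = N n - (A n : ℝ) := by
      rw [Nat.cast_sub hAq]
    have hcast2 : ((q ^ n - (C n - 1) : ℕ) : ℝ) = N n - ((C n : ℝ) - 1) := by
      rw [Nat.cast_sub hCq1, Nat.cast_sub hC1]
      simp only [hN_def]
      push_cast
      ring
    have hw2_0 : (0:ℝ) ≤ ((q ^ n - (C n - 1) : ℕ) : ℝ) / N n :=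
      div_nonneg (Nat.cast_nonneg _) hNpos.le
    have hw21 : ((q ^ n - (C n - 1) : ℕ) : ℝ) / N n ≤ ((q ^ n - A n : ℕ) : ℝ) / N n :=
      div_le_div_of_nonneg_right (by exact_mod_cast Nat.sub_le_sub_left hAC1 (q ^ n)) hNpos.le
    have hw11 : ((q ^ n - A n : ℕ) : ℝ) / N n ≤ 1 := by
      rw [div_le_one hNpos, hcast1]
      have : (0:ℝ) ≤ (A n : ℝ) := Nat.cast_nonneg _
      linarith
    have hlb := pow_sub_pow_lb hw2_0 hw21 hw11 (M n)
    have hub := pow_sub_pow_ub hw2_0 hw21 hw11 (M n)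
    have hdiff : ((q ^ n - A n : ℕ) : ℝ) / N n - ((q ^ n - (C n - 1) : ℕ) : ℝ) / N n =
        ((C n : ℝ) - 1 - (A n : ℝ)) / N n := by
      rw [hcast1, hcast2]
      field_simp
      ring
    -- M bounds
    have hMr0 : (0:ℝ) ≤ (M n : ℝ) := Nat.cast_nonneg _
    have hMle : (M n : ℝ) ≤ (q:ℝ) ^ ((n:ℝ) * R) := by
      rw [hM]
      exact Nat.floor_le (by positivity)
    have hMge : (q:ℝ) ^ ((n:ℝ) * R) / 2 ≤ (M n : ℝ) := by
      have h1 : (q:ℝ) ^ ((n:ℝ) * R) < (M n : ℝ) + 1 := by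
        rw [hM]
        push_cast
        exact Nat.lt_floor_add_one _
      linarith
    -- identity helper
    have hiden : ∀ w : ℝ, (q:ℝ) ^ ((n:ℝ) * R) * ((q:ℝ) ^ ((n:ℝ) * w) / N n) =
        (q:ℝ) ^ ((n:ℝ) * (R + w - 1)) := by
      intro w
      rw [hNrpow, ← Real.rpow_sub hq0, ← Real.rpow_add hq0]
      congr 1
      ring
    -- Bernoulli lower bound on w2 ^ M
    have hC1r : (1:ℝ) ≤ (C n : ℝ) := by exact_mod_cast hC1
    have hvN : ((C n : ℝ) - 1) / N n ≤ b n / N n :=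
      div_le_div_of_nonneg_right (by linarith) hNpos.le
    have hMv : (M n : ℝ) * (((C n : ℝ) - 1) / N n) ≤ (q:ℝ) ^ ((n:ℝ) * c2) := by
      calc (M n : ℝ) * (((C n : ℝ) - 1) / N n)
          ≤ (q:ℝ) ^ ((n:ℝ) * R) * (b n / N n) := by
            apply mul_le_mul hMle hvN (div_nonneg (by linarith) hNpos.le)
              (Real.rpow_nonneg hq0.le _)
        _ = (q:ℝ) ^ ((n:ℝ) * c2) := by rw [hc2_def]; exact hiden z
    have hMv2 : (M n : ℝ) * (((C n : ℝ) - 1) / N n) ≤ 1/2 := hMv.trans hn2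
    have hw2M : (1:ℝ)/2 ≤ (((q ^ n - (C n - 1) : ℕ) : ℝ) / N n) ^ (M n) := by
      have hvpos : (0:ℝ) ≤ ((C n : ℝ) - 1) / N n := div_nonneg (by linarith) hNpos.le
      have hform : ((q ^ n - (C n - 1) : ℕ) : ℝ) / N n = 1 + (-(((C n : ℝ) - 1) / N n)) := by
        rw [hcast2]
        field_simp
        ring
      have hber := one_add_mul_le_pow (a := -(((C n : ℝ) - 1) / N n)) (by linarith) (M n)
      rw [← hform] at hber
      have : 1 + (M n : ℝ) * (-(((C n : ℝ) - 1) / N n)) ≥ 1/2 := by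
        have h6 : (M n : ℝ) * (-(((C n : ℝ) - 1) / N n)) =
            -((M n : ℝ) * (((C n : ℝ) - 1) / N n)) := by ring
        rw [h6]
        linarith
      linarith
    -- lower bound on gap
    have hba : 2 * a n + 1 ≤ b n := by
      have hexp : (n:ℝ) * y = (n:ℝ) * z + (n:ℝ) * (-(2*ε)) := by
        rw [hy_def, hz_def]
        ring
      have heq : a n = b n * (q:ℝ) ^ ((n:ℝ) * (-(2*ε))) := by
        show (q:ℝ) ^ ((n:ℝ) * y) = (q:ℝ) ^ ((n:ℝ) * z) * (q:ℝ) ^ ((n:ℝ) * (-(2*ε)))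
        rw [hexp, Real.rpow_add hq0]
      have htpos : (0:ℝ) < (q:ℝ) ^ ((n:ℝ) * (-(2*ε))) := Real.rpow_pos_of_pos hq0 _
      have h5 : b n * ((q:ℝ) ^ ((n:ℝ) * (-(2*ε)))) ≤ b n * (1/4) :=
        mul_le_mul_of_nonneg_left hn4 (by linarith)
      linarith [heq, h5, hn5]
    have hnum : a n ≤ (C n : ℝ) - 1 - (A n : ℝ) := by linarith
    constructor
    · -- lower bound
      have step1 : (q:ℝ) ^ ((n:ℝ) * R) / 2 * (a n / N n) * (1/2) ≤
          (M n : ℝ) * (((q ^ n - A n : ℕ) : ℝ) / N n - ((q ^ n - (C n - 1) : ℕ) : ℝ) / N n) *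
            ((((q ^ n - (C n - 1) : ℕ) : ℝ) / N n) ^ (M n)) := by
        rw [hdiff]
        apply mul_le_mul
        · apply mul_le_mul hMge (div_le_div_of_nonneg_right hnum hNpos.le)
            (div_nonneg ha_pos.le hNpos.le) hMr0
        · exact hw2M
        · norm_num
        · exact mul_nonneg hMr0 (div_nonneg (by linarith) hNpos.le)
      have step2 : (q:ℝ) ^ ((n:ℝ) * c1) / 4 =
          (q:ℝ) ^ ((n:ℝ) * R) / 2 * (a n / N n) * (1/2) := by
        rw [hc1_def, ← hiden y]
        ring
      exact step2.le.trans (step1.trans hlb)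
    · -- upper bound
      refine hub.trans ?_
      rw [hdiff]
      have hA0 : (0:ℝ) ≤ (A n : ℝ) := Nat.cast_nonneg _
      calc (M n : ℝ) * (((C n : ℝ) - 1 - (A n : ℝ)) / N n)
          ≤ (q:ℝ) ^ ((n:ℝ) * R) * (b n / N n) := by
            apply mul_le_mul hMle (div_le_div_of_nonneg_right (by linarith) hNpos.le)
              (div_nonneg (by linarith) hNpos.le) (Real.rpow_nonneg hq0.le _)
        _ = (q:ℝ) ^ ((n:ℝ) * c2) := by rw [hc2_def]; exact hiden z
  -- rate bounds
  have hrate : ∀ᶠ n : ℕ in Filter.atTop,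
      ((c1 - Real.log 4 / ((n:ℝ) * Real.log q) : ℝ) : EReal) ≤
        rateSeq q (fun k =>
          μ {ω | (k : ℝ)⁻¹ * Real.logb q ((U k ω : ℝ)) ∈ Set.Ioo (x - ε) (x + ε)}) n ∧
      rateSeq q (fun k =>
          μ {ω | (k : ℝ)⁻¹ * Real.logb q ((U k ω : ℝ)) ∈ Set.Ioo (x - ε) (x + ε)}) n ≤
        ((c2 : ℝ) : EReal) := by
    filter_upwards [hDbound, e1] with n hDb hn1
    have hn0 : (0:ℝ) < (n:ℝ) := by exact_mod_cast hn1
    have hcn : 0 < ((n:ℝ) * Real.log q)⁻¹ := by positivity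
    have hr1 : (0:ℝ) < (q:ℝ) ^ ((n:ℝ) * c1) / 4 := by positivity
    have hr2 : (0:ℝ) < (q:ℝ) ^ ((n:ℝ) * c2) := by positivity
    simp only [rateSeq]
    rw [hpe n hn1]
    constructor
    · have h := aux_rate_ge (((n:ℝ) * Real.log q)⁻¹) (D n) ((q:ℝ) ^ ((n:ℝ) * c1) / 4)
        hcn hr1 hDb.1
      have hre : ((n:ℝ) * Real.log q)⁻¹ * Real.log ((q:ℝ) ^ ((n:ℝ) * c1) / 4) =
          c1 - Real.log 4 / ((n:ℝ) * Real.log q) := by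
        rw [Real.log_div (ne_of_gt (Real.rpow_pos_of_pos hq0 _)) (by norm_num),
          Real.log_rpow hq0]
        field_simp
      rw [← hre]
      exact h
    · have h := aux_rate_le (((n:ℝ) * Real.log q)⁻¹) (D n) ((q:ℝ) ^ ((n:ℝ) * c2))
        hcn hr2 hDb.2
      have hre : ((n:ℝ) * Real.log q)⁻¹ * Real.log ((q:ℝ) ^ ((n:ℝ) * c2)) = c2 := by
        rw [Real.log_rpow hq0]
        field_simp
      rw [← hre]
      exact h
  constructor
  · have hlowT : Filter.Tendsto
        (fun n : ℕ => ((c1 - Real.log 4 / ((n:ℝ) * Real.log q) : ℝ) : EReal))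
        Filter.atTop (nhds ((c1 : ℝ) : EReal)) := by
      have hreal : Filter.Tendsto (fun n : ℕ => c1 - Real.log 4 / ((n:ℝ) * Real.log q))
          Filter.atTop (nhds c1) := by
        have := (tendsto_const_nhds (x := Real.log 4) (f := Filter.atTop (α := ℕ))).div_atTop
          (lin_atTop hL)
        simpa using tendsto_const_nhds.sub this
      exact (continuous_coe_real_ereal.tendsto c1).comp hreal
    have hle : ((R + x - 1 - ε : ℝ) : EReal) = ((c1 : ℝ) : EReal) := by
      rw [EReal.coe_eq_coe_iff, hc1_def, hy_def]
      ring
    rw [hle, ← hlowT.liminf_eq]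
    exact Filter.liminf_le_liminf (hrate.mono fun n h => h.1)
  · have hle : ((R + x - 1 + ε : ℝ) : EReal) = ((c2 : ℝ) : EReal) := by
      rw [EReal.coe_eq_coe_iff, hc2_def, hz_def]
      ring
    rw [hle]
    calc Filter.limsup _ Filter.atTop ≤ Filter.limsup (fun _ : ℕ => ((c2 : ℝ) : EReal))
          Filter.atTop := Filter.limsup_le_limsup (hrate.mono fun n h => h.2)
      _ = ((c2 : ℝ) : EReal) := Filter.limsup_const ((c2 : ℝ) : EReal)

end CaseA

section CaseBC
variable {Ω : Type*} [MeasurableSpace Ω] (μ : Measure Ω) [IsProbabilityMeasure μ]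
    (q : ℕ) (hq : 2 ≤ q) (R : ℝ) (hR : R ∈ Set.Ioo (0:ℝ) 1)
    (M : ℕ → ℕ) (hM : ∀ n : ℕ, M n = ⌊(q : ℝ) ^ ((n : ℝ) * R)⌋₊)
    (Un : (n : ℕ) → Fin (M n) → Ω → ℕ)
    (hUnmeas : ∀ n i, Measurable (Un n i))
    (hUnval : ∀ n i ω, Un n i ω ∈ Finset.Icc 1 (q ^ n))
    (hUnunif : ∀ n i, ∀ k ∈ Finset.Icc 1 (q ^ n), μ {ω | Un n i ω = k} = ((q : ℝ≥0∞) ^ n)⁻¹)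
    (hUnindep : ∀ n, iIndepFun (Un n) μ)
    (U : ℕ → Ω → ℕ) (hU : ∀ n ω, U n ω = ⨅ i, Un n i ω)

set_option maxHeartbeats 1000000 in
include hq hR hM hUnmeas hUnval hUnunif hUnindep hU in
lemma caseB (x ε : ℝ) (hxeq : x = 1 - R) (hε : 0 < ε) (hεR : ε < R) :
    Filter.Tendsto
      (rateSeq q (fun n =>
        μ {ω | (n : ℝ)⁻¹ * Real.logb q ((U n ω : ℝ)) ∈ Set.Ioo (x - ε) (x + ε)}))
      Filter.atTop (nhds (0 : EReal)) := by
  have hR0 := hR.1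
  have hR1 := hR.2
  have hq1 : (1:ℝ) < q := by exact_mod_cast hq.trans_lt' Nat.one_lt_two
  have hq0 : (0:ℝ) < q := by linarith
  have hL : 0 < Real.log q := Real.log_pos hq1
  set y : ℝ := x - ε with hy_def
  set z : ℝ := x + ε with hz_def
  have hyz : y < z := by simp only [hy_def, hz_def]; linarith
  have hz1 : z < 1 := by simp only [hz_def, hxeq]; linarith
  have hz0 : 0 < z := by simp only [hz_def, hxeq]; linarith
  have hRy : R + y - 1 = -ε := by simp only [hy_def, hxeq]; ring
  have hRz : R + z - 1 = ε := by simp only [hz_def, hxeq]; ring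
  set a : ℕ → ℝ := fun n => (q:ℝ) ^ ((n:ℝ) * y) with ha_def
  set b : ℕ → ℝ := fun n => (q:ℝ) ^ ((n:ℝ) * z) with hb_def
  set A : ℕ → ℕ := fun n => ⌊a n⌋₊ with hA_def
  set C : ℕ → ℕ := fun n => ⌈b n⌉₊ with hC_def
  set N : ℕ → ℝ := fun n => ((q ^ n : ℕ) : ℝ) with hN_def
  set D : ℕ → ℝ := fun n =>
    (((q ^ n - A n : ℕ) : ℝ) / N n) ^ (M n) - (((q ^ n - (C n - 1) : ℕ) : ℝ) / N n) ^ (M n)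
    with hD_def
  have hpe : ∀ n : ℕ, 1 ≤ n →
      μ {ω | (n : ℝ)⁻¹ * Real.logb q ((U n ω : ℝ)) ∈ Set.Ioo (x - ε) (x + ε)} =
        ENNReal.ofReal (D n) := by
    intro n hn
    exact prob_eq μ q n (M n) hq hn (hM_one q hq R hR M hM n) (Un n) (hUnmeas n)
      (fun i ω => hUnval n i ω) (hUnunif n) (hUnindep n) (U n) (hU n) y z hyz
  have e1 : ∀ᶠ n : ℕ in Filter.atTop, 1 ≤ n := Filter.eventually_ge_atTop 1
  have e2 : ∀ᶠ n : ℕ in Filter.atTop, (q:ℝ) ^ ((n:ℝ) * (-ε)) ≤ 1/4 :=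
    (decay_zero hq1 (by linarith)).eventually_le_const (by norm_num)
  have e3 : ∀ᶠ n : ℕ in Filter.atTop, 2 ≤ (q:ℝ) ^ ((n:ℝ) * R) :=
    (grow_atTop hq1 hR0).eventually_ge_atTop 2
  have e4 : ∀ᶠ n : ℕ in Filter.atTop, 16 ≤ (q:ℝ) ^ ((n:ℝ) * ε) :=
    (grow_atTop hq1 hε).eventually_ge_atTop 16
  have e5 : ∀ᶠ n : ℕ in Filter.atTop, 2 ≤ b n := (grow_atTop hq1 hz0).eventually_ge_atTop 2
  have hDbound : ∀ᶠ n : ℕ in Filter.atTop, 1/2 ≤ D n ∧ D n ≤ 1 := by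
    filter_upwards [e1, e2, e3, e4, e5] with n hn1 hn2 hn3 hn4 hn5
    have hn0 : (0:ℝ) < (n:ℝ) := by exact_mod_cast hn1
    have hqnpos : 0 < q ^ n := pow_pos (by omega) n
    have hNpos : 0 < N n := by simp only [hN_def]; exact_mod_cast hqnpos
    have hNrpow : N n = (q:ℝ) ^ ((n:ℝ) * 1) := by
      rw [mul_one, Real.rpow_natCast, hN_def]
      push_cast
      ring
    have ha_pos : 0 < a n := Real.rpow_pos_of_pos hq0 _
    have hb_pos : 0 < b n := Real.rpow_pos_of_pos hq0 _
    have hab : a n < b n := Real.rpow_lt_rpow_of_exponent_lt hq1 (mul_lt_mul_of_pos_left hyz hn0)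
    have haA : (A n : ℝ) ≤ a n := Nat.floor_le ha_pos.le
    have hbC : b n ≤ (C n : ℝ) := Nat.le_ceil _
    have hCb : (C n : ℝ) ≤ b n + 1 := (Nat.ceil_lt_add_one hb_pos.le).le
    have hC1 : 1 ≤ C n := Nat.ceil_pos.2 hb_pos
    have hC1r : (1:ℝ) ≤ (C n : ℝ) := by exact_mod_cast hC1
    have hbN : b n ≤ N n := by
      rw [hNrpow]
      exact Real.rpow_le_rpow_of_exponent_le hq1.le
        (mul_le_mul_of_nonneg_left hz1.le hn0.le)
    have hCqn : C n ≤ q ^ n := Nat.ceil_le.2 (by exact_mod_cast hbN)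
    have hACr : (A n : ℝ) < (C n : ℝ) := lt_of_le_of_lt haA (lt_of_lt_of_le hab hbC)
    have hAC : A n < C n := by exact_mod_cast hACr
    have hAC1 : A n ≤ C n - 1 := by omega
    have hAq : A n ≤ q ^ n := le_trans (by omega) hCqn
    have hCq1 : C n - 1 ≤ q ^ n := le_trans (by omega) hCqn
    have hcast1 : ((q ^ n - A n : ℕ) : ℝ) = N n - (A n : ℝ) := by
      rw [Nat.cast_sub hAq]
    have hcast2 : ((q ^ n - (C n - 1) : ℕ) : ℝ) = N n - ((C n : ℝ) - 1) := by
      rw [Nat.cast_sub hCq1, Nat.cast_sub hC1]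
      simp only [hN_def]
      push_cast
      ring
    have hA0 : (0:ℝ) ≤ (A n : ℝ) := Nat.cast_nonneg _
    have hMr0 : (0:ℝ) ≤ (M n : ℝ) := Nat.cast_nonneg _
    have hMle : (M n : ℝ) ≤ (q:ℝ) ^ ((n:ℝ) * R) := by
      rw [hM]
      exact Nat.floor_le (by positivity)
    have hMge : (q:ℝ) ^ ((n:ℝ) * R) / 2 ≤ (M n : ℝ) := by
      have h1 : (q:ℝ) ^ ((n:ℝ) * R) < (M n : ℝ) + 1 := by
        rw [hM]
        push_cast
        exact Nat.lt_floor_add_one _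
      linarith
    have hiden : ∀ w : ℝ, (q:ℝ) ^ ((n:ℝ) * R) * ((q:ℝ) ^ ((n:ℝ) * w) / N n) =
        (q:ℝ) ^ ((n:ℝ) * (R + w - 1)) := by
      intro w
      rw [hNrpow, ← Real.rpow_sub hq0, ← Real.rpow_add hq0]
      congr 1
      ring
    -- u := A/N, v := (C-1)/N
    set u : ℝ := (A n : ℝ) / N n with hu_def
    set v : ℝ := ((C n : ℝ) - 1) / N n with hv_def
    have hu0 : 0 ≤ u := div_nonneg hA0 hNpos.le
    have hv0 : 0 ≤ v := div_nonneg (by linarith) hNpos.le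
    have hv1 : v ≤ 1 := by
      rw [hv_def, div_le_one hNpos]
      linarith
    have hw1 : ((q ^ n - A n : ℕ) : ℝ) / N n = 1 - u := by
      rw [hcast1, hu_def]
      field_simp
    have hw2 : ((q ^ n - (C n - 1) : ℕ) : ℝ) / N n = 1 - v := by
      rw [hcast2, hv_def]
      field_simp
    -- Mu small
    have hMu : (M n : ℝ) * u ≤ 1/4 := by
      have h1 : u ≤ a n / N n := div_le_div_of_nonneg_right haA hNpos.le
      have h2 : (M n : ℝ) * u ≤ (q:ℝ) ^ ((n:ℝ) * R) * (a n / N n) :=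
        mul_le_mul hMle h1 hu0 (Real.rpow_nonneg hq0.le _)
      rw [hiden y, hRy] at h2
      linarith [h2.trans hn2]
    -- Mv large
    have hMv : 4 ≤ (M n : ℝ) * v := by
      have hb1 : b n / 2 ≤ b n - 1 := by linarith
      have h1 : b n / (2 * N n) ≤ v := by
        rw [hv_def, ← div_div]
        exact div_le_div_of_nonneg_right (by linarith) hNpos.le
      have h2 : (q:ℝ) ^ ((n:ℝ) * R) / 2 * (b n / (2 * N n)) ≤ (M n : ℝ) * v :=
        mul_le_mul hMge h1 (by positivity) hMr0
      have h3 : (q:ℝ) ^ ((n:ℝ) * R) / 2 * (b n / (2 * N n)) =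
          (q:ℝ) ^ ((n:ℝ) * (R + z - 1)) / 4 := by
        rw [← hiden z]
        ring
      rw [h3, hRz] at h2
      linarith
    have hMv0 : 0 < (M n : ℝ) * v := by linarith
    -- F lower bound
    have hF : 1 - (M n : ℝ) * u ≤ (1 - u) ^ (M n) := by
      have huN : (A n : ℝ) ≤ N n := by linarith [haA, hbN, hab]
      have hu1' : u ≤ 1 := (div_le_one hNpos).2 huN
      have hber := one_add_mul_le_pow (a := -u) (by linarith) (M n)
      calc 1 - (M n : ℝ) * u = 1 + (M n : ℝ) * (-u) := by ring
        _ ≤ (1 + (-u)) ^ (M n) := hber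
        _ = (1 - u) ^ (M n) := by ring_nf
    -- G upper bound
    have hu1 : u ≤ 1 := by
      rw [hu_def, div_le_one hNpos]
      linarith [haA, hab, hbN]
    have hG : (1 - v) ^ (M n) * ((M n : ℝ) * v) ≤ 1 := by
      have hber := one_add_mul_le_pow (a := v) (by linarith) (M n)
      have h1 : (1 - v) ^ (M n) * ((M n : ℝ) * v) ≤ (1 - v) ^ (M n) * (1 + v) ^ (M n) := by
        apply mul_le_mul_of_nonneg_left _ (pow_nonneg (by linarith) _)
        exact le_trans (by linarith) hber
      have h2 : (1 - v) ^ (M n) * (1 + v) ^ (M n) = (1 - v ^ 2) ^ (M n) := by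
        rw [← mul_pow]
        congr 1
        ring
      have hv2 : v * v ≤ 1 := mul_le_one₀ hv1 hv0 hv1
      have hvsq : v ^ 2 = v * v := sq v
      have h3 : (1 - v ^ 2) ^ (M n) ≤ 1 := by
        apply pow_le_one₀ (by linarith [sq_nonneg v]) (by linarith [sq_nonneg v])
      calc (1 - v) ^ (M n) * ((M n : ℝ) * v) ≤ (1 - v ^ 2) ^ (M n) := h2 ▸ h1
        _ ≤ 1 := h3
    have hGle : (1 - v) ^ (M n) ≤ 1/4 := by
      rw [← le_div_iff₀ hMv0] at hG
      calc (1 - v) ^ (M n) ≤ 1 / ((M n : ℝ) * v) := hG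
        _ ≤ 1/4 := by
          rw [div_le_div_iff₀ hMv0 (by norm_num)]
          linarith
    constructor
    · rw [hD_def]
      simp only
      rw [hw1, hw2]
      linarith [hF, hMu, hGle]
    · rw [hD_def]
      simp only
      rw [hw1, hw2]
      have h1 : (1 - u) ^ (M n) ≤ 1 := pow_le_one₀ (by linarith) (by linarith)
      have h2 : 0 ≤ (1 - v) ^ (M n) := pow_nonneg (by linarith) _
      linarith
  -- squeeze
  have hrate : ∀ᶠ n : ℕ in Filter.atTop,
      ((Real.log (1/2) / ((n:ℝ) * Real.log q) : ℝ) : EReal) ≤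
        rateSeq q (fun k =>
          μ {ω | (k : ℝ)⁻¹ * Real.logb q ((U k ω : ℝ)) ∈ Set.Ioo (x - ε) (x + ε)}) n ∧
      rateSeq q (fun k =>
          μ {ω | (k : ℝ)⁻¹ * Real.logb q ((U k ω : ℝ)) ∈ Set.Ioo (x - ε) (x + ε)}) n ≤
        (0 : EReal) := by
    filter_upwards [hDbound, e1] with n hDb hn1
    have hn0 : (0:ℝ) < (n:ℝ) := by exact_mod_cast hn1
    have hcn : 0 < ((n:ℝ) * Real.log q)⁻¹ := by positivity
    simp only [rateSeq]
    rw [hpe n hn1]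
    constructor
    · have h := aux_rate_ge (((n:ℝ) * Real.log q)⁻¹) (D n) (1/2) hcn (by norm_num) hDb.1
      have hre : ((n:ℝ) * Real.log q)⁻¹ * Real.log (1/2) =
          Real.log (1/2) / ((n:ℝ) * Real.log q) := by
        ring
      rw [← hre]
      exact h
    · have h := aux_rate_le (((n:ℝ) * Real.log q)⁻¹) (D n) 1 hcn (by norm_num) hDb.2
      refine le_trans h (le_of_eq ?_)
      rw [Real.log_one, mul_zero]
      rfl
  have hlowT : Filter.Tendsto
      (fun n : ℕ => ((Real.log (1/2) / ((n:ℝ) * Real.log q) : ℝ) : EReal))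
      Filter.atTop (nhds (0 : EReal)) := by
    have hreal : Filter.Tendsto (fun n : ℕ => Real.log (1/2) / ((n:ℝ) * Real.log q))
        Filter.atTop (nhds 0) :=
      tendsto_const_nhds.div_atTop (lin_atTop hL)
    have := (continuous_coe_real_ereal.tendsto 0).comp hreal
    simpa [Function.comp_def] using this
  refine tendsto_of_tendsto_of_tendsto_of_le_of_le' hlowT tendsto_const_nhds
    (hrate.mono fun n h => h.1) (hrate.mono fun n h => h.2)

set_option maxHeartbeats 1000000 in
include hq hR hM hUnmeas hUnval hUnunif hUnindep hU in
lemma caseC (x ε : ℝ) (hx1 : x ≤ 1) (hxgt : 1 - R < x) (hε : 0 < ε)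
    (hεδ : ε < x - (1 - R)) :
    Filter.limsup
      (rateSeq q (fun n =>
        μ {ω | (n : ℝ)⁻¹ * Real.logb q ((U n ω : ℝ)) ∈ Set.Ioo (x - ε) (x + ε)}))
      Filter.atTop = (⊥ : EReal) := by
  have hR0 := hR.1
  have hR1 := hR.2
  have hq1 : (1:ℝ) < q := by exact_mod_cast hq.trans_lt' Nat.one_lt_two
  have hq0 : (0:ℝ) < q := by linarith
  have hL : 0 < Real.log q := Real.log_pos hq1
  set y : ℝ := x - ε with hy_def
  set z : ℝ := x + ε with hz_def
  have hyz : y < z := by simp only [hy_def, hz_def]; linarith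
  have hy0 : 0 < y := by simp only [hy_def]; linarith
  have hy1 : y ≤ 1 := by simp only [hy_def]; linarith
  set θ : ℝ := R + y - 1 with hθ_def
  have hθ : 0 < θ := by simp only [hθ_def, hy_def]; linarith
  set a : ℕ → ℝ := fun n => (q:ℝ) ^ ((n:ℝ) * y) with ha_def
  set A : ℕ → ℕ := fun n => ⌊a n⌋₊ with hA_def
  set C : ℕ → ℕ := fun n => ⌈(q:ℝ) ^ ((n:ℝ) * z)⌉₊ with hC_def
  set N : ℕ → ℝ := fun n => ((q ^ n : ℕ) : ℝ) with hN_def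
  set D : ℕ → ℝ := fun n =>
    (((q ^ n - A n : ℕ) : ℝ) / N n) ^ (M n) - (((q ^ n - (C n - 1) : ℕ) : ℝ) / N n) ^ (M n)
    with hD_def
  have hpe : ∀ n : ℕ, 1 ≤ n →
      μ {ω | (n : ℝ)⁻¹ * Real.logb q ((U n ω : ℝ)) ∈ Set.Ioo (x - ε) (x + ε)} =
        ENNReal.ofReal (D n) := by
    intro n hn
    exact prob_eq μ q n (M n) hq hn (hM_one q hq R hR M hM n) (Un n) (hUnmeas n)
      (fun i ω => hUnval n i ω) (hUnunif n) (hUnindep n) (U n) (hU n) y z hyz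
  have e1 : ∀ᶠ n : ℕ in Filter.atTop, 1 ≤ n := Filter.eventually_ge_atTop 1
  have e3 : ∀ᶠ n : ℕ in Filter.atTop, 2 ≤ (q:ℝ) ^ ((n:ℝ) * R) :=
    (grow_atTop hq1 hR0).eventually_ge_atTop 2
  have e6 : ∀ᶠ n : ℕ in Filter.atTop, 2 ≤ a n := (grow_atTop hq1 hy0).eventually_ge_atTop 2
  set g : ℕ → ℝ := fun n => -((q:ℝ) ^ ((n:ℝ) * θ) / 4 / ((n:ℝ) * Real.log q)) with hg_def
  have hrate : ∀ᶠ n : ℕ in Filter.atTop,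
      rateSeq q (fun k =>
          μ {ω | (k : ℝ)⁻¹ * Real.logb q ((U k ω : ℝ)) ∈ Set.Ioo (x - ε) (x + ε)}) n ≤
        ((g n : ℝ) : EReal) := by
    filter_upwards [e1, e3, e6] with n hn1 hn3 hn6
    have hn0 : (0:ℝ) < (n:ℝ) := by exact_mod_cast hn1
    have hqnpos : 0 < q ^ n := pow_pos (by omega) n
    have hNpos : 0 < N n := by simp only [hN_def]; exact_mod_cast hqnpos
    have hNrpow : N n = (q:ℝ) ^ ((n:ℝ) * 1) := by
      rw [mul_one, Real.rpow_natCast, hN_def]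
      push_cast
      ring
    have ha_pos : 0 < a n := Real.rpow_pos_of_pos hq0 _
    have haA : (A n : ℝ) ≤ a n := Nat.floor_le ha_pos.le
    have haN : a n ≤ N n := by
      rw [hNrpow]
      exact Real.rpow_le_rpow_of_exponent_le hq1.le
        (mul_le_mul_of_nonneg_left hy1 hn0.le)
    have hAq : A n ≤ q ^ n := by
      have : (A n : ℝ) ≤ ((q ^ n : ℕ) : ℝ) := le_trans haA haN
      exact_mod_cast this
    have hcast1 : ((q ^ n - A n : ℕ) : ℝ) = N n - (A n : ℝ) := by
      rw [Nat.cast_sub hAq]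
    set u : ℝ := (A n : ℝ) / N n with hu_def
    have hA0 : (0:ℝ) ≤ (A n : ℝ) := Nat.cast_nonneg _
    have hu0 : 0 ≤ u := div_nonneg hA0 hNpos.le
    have hu1 : u ≤ 1 := by
      rw [hu_def, div_le_one hNpos]
      linarith
    have hw1 : ((q ^ n - A n : ℕ) : ℝ) / N n = 1 - u := by
      rw [hcast1, hu_def]
      field_simp
    have hMge : (q:ℝ) ^ ((n:ℝ) * R) / 2 ≤ (M n : ℝ) := by
      have h1 : (q:ℝ) ^ ((n:ℝ) * R) < (M n : ℝ) + 1 := by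
        rw [hM]
        push_cast
        exact Nat.lt_floor_add_one _
      linarith
    have hMr0 : (0:ℝ) ≤ (M n : ℝ) := Nat.cast_nonneg _
    have hiden : (q:ℝ) ^ ((n:ℝ) * R) * ((q:ℝ) ^ ((n:ℝ) * y) / N n) =
        (q:ℝ) ^ ((n:ℝ) * θ) := by
      rw [hNrpow, ← Real.rpow_sub hq0, ← Real.rpow_add hq0, hθ_def]
      congr 1
      ring
    -- Mu is large
    have hMu : (q:ℝ) ^ ((n:ℝ) * θ) / 4 ≤ (M n : ℝ) * u := by
      have hAf : a n - 1 ≤ (A n : ℝ) := (Nat.sub_one_lt_floor (a n)).le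
      have h1 : a n / (2 * N n) ≤ u := by
        rw [hu_def, ← div_div]
        exact div_le_div_of_nonneg_right (by linarith) hNpos.le
      have h2 : (q:ℝ) ^ ((n:ℝ) * R) / 2 * (a n / (2 * N n)) ≤ (M n : ℝ) * u :=
        mul_le_mul hMge h1 (by positivity) hMr0
      have h3 : (q:ℝ) ^ ((n:ℝ) * R) / 2 * (a n / (2 * N n)) = (q:ℝ) ^ ((n:ℝ) * θ) / 4 := by
        rw [← hiden]
        ring
      rw [h3] at h2
      exact h2
    -- D ≤ exp(-(Mu))
    have hDexp : D n ≤ Real.exp ((M n : ℝ) * (-u)) := by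
      have h1 : D n ≤ (1 - u) ^ (M n) := by
        rw [hD_def]
        simp only
        rw [hw1]
        have : (0:ℝ) ≤ (((q ^ n - (C n - 1) : ℕ) : ℝ) / N n) ^ (M n) :=
          pow_nonneg (div_nonneg (Nat.cast_nonneg _) hNpos.le) _
        linarith
      have h2 : (1 - u) ^ (M n) ≤ (Real.exp (-u)) ^ (M n) := by
        apply pow_le_pow_left₀ (by linarith) _ _
        linarith [Real.add_one_le_exp (-u)]
      have h3 : (Real.exp (-u)) ^ (M n) = Real.exp ((M n : ℝ) * (-u)) := by
        rw [← Real.exp_nat_mul]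
      linarith
    have hcn : 0 < ((n:ℝ) * Real.log q)⁻¹ := by positivity
    simp only [rateSeq]
    rw [hpe n hn1]
    have h := aux_rate_le (((n:ℝ) * Real.log q)⁻¹) (D n) (Real.exp ((M n : ℝ) * (-u)))
      hcn (Real.exp_pos _) hDexp
    refine le_trans h ?_
    rw [Real.log_exp, EReal.coe_le_coe_iff, hg_def]
    simp only
    have h7 : ((n:ℝ) * Real.log q)⁻¹ * ((q:ℝ) ^ ((n:ℝ) * θ) / 4) ≤
        ((n:ℝ) * Real.log q)⁻¹ * ((M n : ℝ) * u) := mul_le_mul_of_nonneg_left hMu hcn.le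
    have h8 : -((q:ℝ) ^ ((n:ℝ) * θ) / 4 / ((n:ℝ) * Real.log q)) =
        -(((n:ℝ) * Real.log q)⁻¹ * ((q:ℝ) ^ ((n:ℝ) * θ) / 4)) := by ring
    rw [h8]
    linarith [h7]
  have hgbot : Filter.Tendsto (fun n : ℕ => ((g n : ℝ) : EReal)) Filter.atTop
      (nhds (⊥ : EReal)) := by
    apply aux_coe_atBot
    rw [hg_def]
    apply Filter.tendsto_neg_atTop_atBot.comp
    have h1 : Filter.Tendsto (fun n : ℕ => (q:ℝ) ^ ((n:ℝ) * θ) / ((n:ℝ) * Real.log q))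
        Filter.atTop Filter.atTop := exp_beats_lin hq1 hθ hL
    have h2 := h1.atTop_div_const (r := 4) (by norm_num)
    refine h2.congr fun n => by ring
  have hle := Filter.limsup_le_limsup hrate
  rw [hgbot.limsup_eq] at hle
  exact le_bot_iff.1 hle

end CaseBC

set_option maxHeartbeats 1000000 in
/-- `{(1/n) log_q Uⁿ}` satisfies the LDP with rate function `I^U`. -/
theorem grand_min_uniform_LDP
    {Ω : Type*} [MeasurableSpace Ω] (μ : Measure Ω) [IsProbabilityMeasure μ]
    (q : ℕ) (hq : 2 ≤ q) (R : ℝ) (hR : R ∈ Set.Ioo (0:ℝ) 1)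
    (M : ℕ → ℕ) (hM : ∀ n : ℕ, M n = ⌊(q : ℝ) ^ ((n : ℝ) * R)⌋₊)
    (Un : (n : ℕ) → Fin (M n) → Ω → ℕ)
    (hUnmeas : ∀ n i, Measurable (Un n i))
    (hUnval : ∀ n i ω, Un n i ω ∈ Finset.Icc 1 (q ^ n))
    (hUnunif : ∀ n i, ∀ k ∈ Finset.Icc 1 (q ^ n), μ {ω | Un n i ω = k} = ((q : ℝ≥0∞) ^ n)⁻¹)
    (hUnindep : ∀ n, iIndepFun (Un n) μ)
    (U : ℕ → Ω → ℕ) (hU : ∀ n ω, U n ω = ⨅ i, Un n i ω)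
    :
    ∀ x ∈ Set.Icc (0:ℝ) 1,
      Filter.Tendsto
        (fun ε : ℝ =>
          Filter.liminf
            (rateSeq q (fun n =>
              μ {ω | (n : ℝ)⁻¹ * Real.logb q ((U n ω : ℝ)) ∈ Set.Ioo (x - ε) (x + ε)}))
            Filter.atTop)
        (nhdsWithin 0 (Set.Ioi 0)) (nhds (-(IU R x))) ∧
      Filter.Tendsto
        (fun ε : ℝ =>
          Filter.limsup
            (rateSeq q (fun n =>
              μ {ω | (n : ℝ)⁻¹ * Real.logb q ((U n ω : ℝ)) ∈ Set.Ioo (x - ε) (x + ε)}))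
            Filter.atTop)
        (nhdsWithin 0 (Set.Ioi 0)) (nhds (-(IU R x))) := by
  intro x hx
  have hx0 := hx.1
  have hx1 := hx.2
  have hR0 := hR.1
  have hR1 := hR.2
  rcases lt_trichotomy x (1 - R) with hlt | heq | hgt
  · -- x < 1 - R
    have htarget : -(IU R x) = ((R + x - 1 : ℝ) : EReal) := by
      rw [IU, if_pos hlt.le, ← EReal.coe_neg, EReal.coe_eq_coe_iff]
      ring
    have hδ : 0 < (1 - R - x) / 2 := by linarith
    constructor
    · rw [htarget]
      apply aux_outer_squeeze (R + x - 1) ((1 - R - x) / 2) hδ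
      intro ε hε
      obtain ⟨h1, h2⟩ := caseA μ q hq R hR M hM Un hUnmeas hUnval hUnunif hUnindep U hU
        x ε hx0 hlt hε.1 hε.2
      exact ⟨h1, (Filter.liminf_le_limsup).trans h2⟩
    · rw [htarget]
      apply aux_outer_squeeze (R + x - 1) ((1 - R - x) / 2) hδ
      intro ε hε
      obtain ⟨h1, h2⟩ := caseA μ q hq R hR M hM Un hUnmeas hUnval hUnunif hUnindep U hU
        x ε hx0 hlt hε.1 hε.2
      exact ⟨h1.trans Filter.liminf_le_limsup, h2⟩
  · -- x = 1 - R
    have htarget : -(IU R x) = ((0 : ℝ) : EReal) := by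
      rw [IU, if_pos heq.le, heq]
      norm_num
    constructor
    · rw [htarget]
      apply aux_outer_squeeze 0 R hR0
      intro ε hε
      have hT := caseB μ q hq R hR M hM Un hUnmeas hUnval hUnunif hUnindep U hU
        x ε heq hε.1 hε.2
      rw [hT.liminf_eq]
      constructor
      · exact_mod_cast EReal.coe_le_coe_iff.2 (by linarith [hε.1] : (0:ℝ) - ε ≤ 0)
      · exact_mod_cast EReal.coe_le_coe_iff.2 (by linarith [hε.1] : (0:ℝ) ≤ 0 + ε)
    · rw [htarget]
      apply aux_outer_squeeze 0 R hR0
      intro ε hε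
      have hT := caseB μ q hq R hR M hM Un hUnmeas hUnval hUnunif hUnindep U hU
        x ε heq hε.1 hε.2
      rw [hT.limsup_eq]
      constructor
      · exact_mod_cast EReal.coe_le_coe_iff.2 (by linarith [hε.1] : (0:ℝ) - ε ≤ 0)
      · exact_mod_cast EReal.coe_le_coe_iff.2 (by linarith [hε.1] : (0:ℝ) ≤ 0 + ε)
  · -- x > 1 - R
    have htarget : -(IU R x) = (⊥ : EReal) := by
      rw [IU, if_neg (not_le.2 hgt)]
      rfl
    have hmem : Set.Ioo (0:ℝ) (x - (1 - R)) ∈ nhdsWithin (0:ℝ) (Set.Ioi 0) :=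
      Ioo_mem_nhdsGT_of_mem (by simp; linarith)
    have hls : ∀ ε ∈ Set.Ioo (0:ℝ) (x - (1 - R)),
        Filter.limsup
          (rateSeq q (fun n =>
            μ {ω | (n : ℝ)⁻¹ * Real.logb q ((U n ω : ℝ)) ∈ Set.Ioo (x - ε) (x + ε)}))
          Filter.atTop = (⊥ : EReal) := fun ε hε =>
      caseC μ q hq R hR M hM Un hUnmeas hUnval hUnunif hUnindep U hU x ε hx1 hgt hε.1 hε.2
    constructor
    · rw [htarget]
      have heqf : (fun ε : ℝ =>
          Filter.liminf
            (rateSeq q (fun n =>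
              μ {ω | (n : ℝ)⁻¹ * Real.logb q ((U n ω : ℝ)) ∈ Set.Ioo (x - ε) (x + ε)}))
            Filter.atTop) =ᶠ[nhdsWithin 0 (Set.Ioi 0)] (fun _ => (⊥ : EReal)) := by
        filter_upwards [hmem] with ε hε
        have h1 := hls ε hε
        have h2 := Filter.liminf_le_limsup (u := rateSeq q (fun n =>
          μ {ω | (n : ℝ)⁻¹ * Real.logb q ((U n ω : ℝ)) ∈ Set.Ioo (x - ε) (x + ε)}))
          (f := Filter.atTop)
        rw [h1] at h2
        exact le_bot_iff.1 h2
      exact Filter.Tendsto.congr' heqf.symm tendsto_const_nhds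
    · rw [htarget]
      have heqf : (fun ε : ℝ =>
          Filter.limsup
            (rateSeq q (fun n =>
              μ {ω | (n : ℝ)⁻¹ * Real.logb q ((U n ω : ℝ)) ∈ Set.Ioo (x - ε) (x + ε)}))
            Filter.atTop) =ᶠ[nhdsWithin 0 (Set.Ioi 0)] (fun _ => (⊥ : EReal)) := by
        filter_upwards [hmem] with ε hε
        exact hls ε hε
      exact Filter.Tendsto.congr' heqf.symm tendsto_const_nhds
end

section
/- The expected value of U^n satisfies lim_{n→∞} (1/n) log E(U^n) = 1 − R. -/
open MeasureTheory ProbabilityTheory Filter Set Topology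
open scoped ENNReal

lemma geom_key (a : ℝ) (M : ℕ) :
    (a+1)^(M+1) - a^(M+1) = ∑ i ∈ Finset.range (M+1), (a+1)^i * a^(M-i) := by
  have h := geom_sum₂_mul (a+1) a (M+1)
  simp only [add_sub_cancel_left, mul_one] at h
  rw [← h]
  rfl

lemma tele_lower (a : ℝ) (ha : 0 ≤ a) (M : ℕ) :
    ((M:ℝ)+1) * a^M ≤ (a+1)^(M+1) - a^(M+1) := by
  rw [geom_key a M]
  calc ((M:ℝ)+1) * a^M = ∑ _i ∈ Finset.range (M+1), a^M := by
        simp [Finset.sum_const, mul_comm]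
    _ ≤ _ := by
        apply Finset.sum_le_sum
        intro i hi
        rw [Finset.mem_range, Nat.lt_succ_iff] at hi
        calc a^M = a^i * a^(M-i) := by rw [← pow_add]; congr 1; omega
          _ ≤ (a+1)^i * a^(M-i) := by
            apply mul_le_mul_of_nonneg_right _ (pow_nonneg ha _)
            exact pow_le_pow_left₀ ha (by linarith) i

lemma tele_upper (a : ℝ) (ha : 0 ≤ a) (M : ℕ) :
    (a+1)^(M+1) - a^(M+1) ≤ ((M:ℝ)+1) * (a+1)^M := by
  rw [geom_key a M]
  calc ∑ i ∈ Finset.range (M+1), (a+1)^i * a^(M-i)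
      ≤ ∑ _i ∈ Finset.range (M+1), (a+1)^M := by
        apply Finset.sum_le_sum
        intro i hi
        rw [Finset.mem_range, Nat.lt_succ_iff] at hi
        calc (a+1)^i * a^(M-i) ≤ (a+1)^i * (a+1)^(M-i) := by
              apply mul_le_mul_of_nonneg_left _ (pow_nonneg (by linarith) _)
              exact pow_le_pow_left₀ ha (by linarith) _
          _ = (a+1)^M := by rw [← pow_add]; congr 1; omega
    _ = _ := by simp [Finset.sum_const, mul_comm]

lemma sum_pow_lower (N M : ℕ) :
    (N:ℝ)^(M+1) ≤ ((M:ℝ)+1) * ∑ k ∈ Finset.range N, ((k:ℝ)+1)^M := by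
  have h : (N:ℝ)^(M+1) = ∑ k ∈ Finset.range N, (((k:ℝ)+1)^(M+1) - (k:ℝ)^(M+1)) := by
    have := Finset.sum_range_sub (fun k => (k:ℝ)^(M+1)) N
    simp only [Nat.cast_add, Nat.cast_one] at this ⊢
    rw [this]
    simp
  rw [h, Finset.mul_sum]
  exact Finset.sum_le_sum fun k _ => tele_upper (k:ℝ) (Nat.cast_nonneg k) M

lemma sum_pow_upper (N M : ℕ) :
    ((M:ℝ)+1) * ∑ k ∈ Finset.range N, (k:ℝ)^M ≤ (N:ℝ)^(M+1) := by
  have h : (N:ℝ)^(M+1) = ∑ k ∈ Finset.range N, (((k:ℝ)+1)^(M+1) - (k:ℝ)^(M+1)) := by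
    have := Finset.sum_range_sub (fun k => (k:ℝ)^(M+1)) N
    simp only [Nat.cast_add, Nat.cast_one] at this ⊢
    rw [this]
    simp
  rw [h, Finset.mul_sum]
  exact Finset.sum_le_sum fun k _ => tele_lower (k:ℝ) (Nat.cast_nonneg k) M

lemma layercake_nat {Ω : Type*} [MeasurableSpace Ω] (μ : Measure Ω) (f : Ω → ℕ)
    (hmeas : ∀ k : ℕ, MeasurableSet {ω | k < f ω}) :
    ∫⁻ ω, (f ω : ℝ≥0∞) ∂μ = ∑' k : ℕ, μ {ω | k < f ω} := by
  have h1 : ∀ ω, (f ω : ℝ≥0∞)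
      = ∑' k : ℕ, Set.indicator {ω' | k < f ω'} (fun _ => (1:ℝ≥0∞)) ω := by
    intro ω
    have h2 : ∀ k : ℕ, Set.indicator {ω' | k < f ω'} (fun _ => (1:ℝ≥0∞)) ω
        = if k < f ω then 1 else 0 := by
      intro k
      by_cases h : k < f ω <;> simp [Set.indicator_apply, h]
    rw [tsum_congr h2, tsum_eq_sum (s := Finset.range (f ω))
      (by intro k hk; rw [Finset.mem_range] at hk; simp [hk])]
    rw [Finset.sum_ite_of_true (fun k hk => Finset.mem_range.1 hk)]
    simp
  rw [lintegral_congr h1,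
    lintegral_tsum (fun k => (measurable_const.indicator (hmeas k)).aemeasurable)]
  exact tsum_congr fun k => lintegral_indicator_one (hmeas k)

/-- `lim_n (1/n) log_q E(Uⁿ) = 1 - R`. -/
theorem grand_min_uniform_mean_exponent
    {Ω : Type*} [MeasurableSpace Ω] (μ : Measure Ω) [IsProbabilityMeasure μ]
    (q : ℕ) (hq : 2 ≤ q) (R : ℝ) (hR : R ∈ Set.Ioo (0:ℝ) 1)
    (M : ℕ → ℕ) (hM : ∀ n : ℕ, M n = ⌊(q : ℝ) ^ ((n : ℝ) * R)⌋₊)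
    (Un : (n : ℕ) → Fin (M n) → Ω → ℕ)
    (hUnmeas : ∀ n i, Measurable (Un n i))
    (hUnval : ∀ n i ω, Un n i ω ∈ Finset.Icc 1 (q ^ n))
    (hUnunif : ∀ n i, ∀ k ∈ Finset.Icc 1 (q ^ n), μ {ω | Un n i ω = k} = ((q : ℝ≥0∞) ^ n)⁻¹)
    (hUnindep : ∀ n, iIndepFun (Un n) μ)
    (U : ℕ → Ω → ℕ) (hU : ∀ n ω, U n ω = ⨅ i, Un n i ω)
    :
    Filter.Tendsto
      (rateSeq q (fun n => ∫⁻ ω, (U n ω : ℝ≥0∞) ∂μ))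
      Filter.atTop (nhds ((1 - R : ℝ) : EReal)) := by
  obtain ⟨hR0, hR1⟩ := hR
  have hq1 : (1:ℝ) < (q:ℝ) := by exact_mod_cast lt_of_lt_of_le one_lt_two hq
  have hq0 : (0:ℝ) < (q:ℝ) := lt_trans one_pos hq1
  -- M n ≥ 1
  have hM1 : ∀ n, 1 ≤ M n := by
    intro n
    rw [hM n]
    apply Nat.le_floor
    rw [Nat.cast_one]
    calc (1:ℝ) = (q:ℝ) ^ (0:ℝ) := (Real.rpow_zero _).symm
      _ ≤ (q:ℝ) ^ ((n:ℝ) * R) :=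
        Real.rpow_le_rpow_of_exponent_le hq1.le (by positivity)
  have hNE : ∀ n, Nonempty (Fin (M n)) := fun n => ⟨⟨0, hM1 n⟩⟩
  -- the sets {k < U n} as intersections
  have hset : ∀ n k, {ω | k < U n ω} = ⋂ i, Un n i ⁻¹' Set.Ioi k := by
    intro n k
    haveI := hNE n
    ext ω
    simp only [Set.mem_setOf_eq, Set.mem_iInter, Set.mem_preimage, Set.mem_Ioi, hU]
    rw [show (k < ⨅ i, Un n i ω ↔ k + 1 ≤ ⨅ i, Un n i ω) from Iff.rfl,
      le_ciInf_iff (OrderBot.bddBelow _)]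
    exact forall_congr' fun i => Iff.rfl
  have hmeasA : ∀ n k, MeasurableSet {ω | k < U n ω} := by
    intro n k
    rw [hset n k]
    exact MeasurableSet.iInter fun i => hUnmeas n i measurableSet_Ioi
  -- single variable tail probability
  have hone : ∀ n (i : Fin (M n)) k, k < q ^ n →
      μ (Un n i ⁻¹' Set.Ioi k) = ((q ^ n - k : ℕ) : ℝ≥0∞) * ((q : ℝ≥0∞) ^ n)⁻¹ := by
    intro n i k hk
    have hsplit : Un n i ⁻¹' Set.Ioi k
        = ⋃ j ∈ Finset.Icc (k+1) (q ^ n), {ω | Un n i ω = j} := by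
      ext ω
      have hv := Finset.mem_Icc.1 (hUnval n i ω)
      simp only [Set.mem_preimage, Set.mem_Ioi, Set.mem_iUnion, Finset.mem_Icc,
        Set.mem_setOf_eq]
      constructor
      · intro h; exact ⟨Un n i ω, ⟨h, hv.2⟩, rfl⟩
      · rintro ⟨j, ⟨hj1, _⟩, rfl⟩; omega
    rw [hsplit, measure_biUnion_finset]
    · rw [Finset.sum_congr rfl (fun j hj => hUnunif n i j
        (by rw [Finset.mem_Icc] at hj ⊢; omega))]
      rw [Finset.sum_const, Nat.card_Icc]
      rw [show q ^ n + 1 - (k + 1) = q ^ n - k from by omega]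
      simp [nsmul_eq_mul]
    · intro a ha b hb hab
      simp only [Set.disjoint_left, Set.mem_setOf_eq]
      intro ω h1 h2
      exact hab (by rw [← h1, ← h2])
    · intro j _
      exact hUnmeas n i (measurableSet_singleton j)
  -- tail probability of the min
  have htail : ∀ n k, k < q ^ n →
      μ {ω | k < U n ω} = (((q ^ n - k : ℕ) : ℝ≥0∞) * ((q : ℝ≥0∞) ^ n)⁻¹) ^ (M n) := by
    intro n k hk
    rw [hset n k]
    rw [(hUnindep n).meas_iInter (fun i => ⟨Set.Ioi k, measurableSet_Ioi, rfl⟩)]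
    rw [Finset.prod_congr rfl (fun i _ => hone n i k hk)]
    simp [Finset.prod_const, Finset.card_univ]
  -- tail probability vanishes beyond q^n
  have htail0 : ∀ n k, q ^ n ≤ k → μ {ω | k < U n ω} = 0 := by
    intro n k hk
    convert measure_empty (μ := μ)
    rw [Set.eq_empty_iff_forall_notMem]
    intro ω hω
    simp only [Set.mem_setOf_eq, hU] at hω
    have hle : U n ω ≤ q ^ n := by
      rw [hU]
      refine le_trans (ciInf_le (OrderBot.bddBelow _) ⟨0, hM1 n⟩) ?_
      exact (Finset.mem_Icc.1 (hUnval n ⟨0, hM1 n⟩ ω)).2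
    rw [hU] at hle
    omega
  -- the expectation formula
  have hE : ∀ n, (∫⁻ ω, (U n ω : ℝ≥0∞) ∂μ)
      = ∑ k ∈ Finset.range (q ^ n),
          (((k + 1 : ℕ) : ℝ≥0∞) * ((q : ℝ≥0∞) ^ n)⁻¹) ^ (M n) := by
    intro n
    rw [layercake_nat μ (U n) (hmeasA n)]
    rw [tsum_eq_sum (s := Finset.range (q ^ n))
      (fun k hk => htail0 n k (by rw [Finset.mem_range] at hk; omega))]
    rw [Finset.sum_congr rfl (fun k hk => htail n k (Finset.mem_range.1 hk))]
    rw [← Finset.sum_range_reflect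
      (fun j => (((j + 1 : ℕ) : ℝ≥0∞) * ((q : ℝ≥0∞) ^ n)⁻¹) ^ (M n)) (q ^ n)]
    apply Finset.sum_congr rfl
    intro k hk
    rw [Finset.mem_range] at hk
    rw [show q ^ n - 1 - k + 1 = q ^ n - k from by omega]
  -- real-valued version of the expectation
  set s : ℕ → ℝ := fun n => ∑ k ∈ Finset.range (q ^ n),
      (((k:ℝ) + 1) * ((q:ℝ) ^ n)⁻¹) ^ (M n) with hsdef
  have hqE0 : (q : ℝ≥0∞) ≠ 0 := by
    simp only [ne_eq, Nat.cast_eq_zero]; omega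
  have hqET : (q : ℝ≥0∞) ≠ ⊤ := ENNReal.natCast_ne_top q
  have hterm_ne_top : ∀ n k : ℕ,
      (((k + 1 : ℕ) : ℝ≥0∞) * ((q : ℝ≥0∞) ^ n)⁻¹) ^ (M n) ≠ ⊤ := by
    intro n k
    apply ENNReal.pow_ne_top
    exact ENNReal.mul_ne_top (ENNReal.natCast_ne_top _)
      (ENNReal.inv_ne_top.2 (pow_ne_zero n hqE0))
  have hEtop : ∀ n, (∫⁻ ω, (U n ω : ℝ≥0∞) ∂μ) ≠ ⊤ := by
    intro n
    rw [hE n]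
    exact (ENNReal.sum_lt_top.2 fun k _ => (hterm_ne_top n k).lt_top).ne
  have hEtoReal : ∀ n, (∫⁻ ω, (U n ω : ℝ≥0∞) ∂μ).toReal = s n := by
    intro n
    rw [hE n, ENNReal.toReal_sum (fun k _ => hterm_ne_top n k)]
    apply Finset.sum_congr rfl
    intro k _
    simp only [ENNReal.toReal_pow, ENNReal.toReal_mul, ENNReal.toReal_inv,
      ENNReal.toReal_natCast]
    push_cast
    ring
  -- real bounds on s
  have hNpos : ∀ n : ℕ, (0:ℝ) < (q:ℝ) ^ n := fun n => pow_pos hq0 n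
  have hLpos : ∀ n : ℕ, (0:ℝ) < (M n : ℝ) + 1 := fun n => by positivity
  have hfact : ∀ n, s n
      = (∑ k ∈ Finset.range (q ^ n), ((k:ℝ)+1) ^ (M n)) * (((q:ℝ) ^ n)⁻¹) ^ (M n) := by
    intro n
    rw [hsdef]
    simp only [mul_pow, ← Finset.sum_mul]
  have hNL : ∀ n, ((q:ℝ) ^ n) ^ (M n + 1) * (((q:ℝ) ^ n)⁻¹) ^ (M n) = (q:ℝ) ^ n := by
    intro n
    rw [inv_pow, pow_succ]
    field_simp
  have hcastN : ∀ n : ℕ, ((q ^ n : ℕ) : ℝ) = (q:ℝ) ^ n := fun n => by push_cast; ring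
  have hslow : ∀ n, ((q:ℝ) ^ n) / ((M n : ℝ) + 1) ≤ s n := by
    intro n
    have h1 := sum_pow_lower (q ^ n) (M n)
    rw [hcastN n] at h1
    rw [div_le_iff₀ (hLpos n), hfact n]
    calc (q:ℝ) ^ n = ((q:ℝ) ^ n) ^ (M n + 1) * (((q:ℝ) ^ n)⁻¹) ^ (M n) := (hNL n).symm
      _ ≤ (((M n : ℝ) + 1) * ∑ k ∈ Finset.range (q ^ n), ((k:ℝ)+1) ^ (M n))
            * (((q:ℝ) ^ n)⁻¹) ^ (M n) := by
          apply mul_le_mul_of_nonneg_right h1 (by positivity)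
      _ = (∑ k ∈ Finset.range (q ^ n), ((k:ℝ)+1) ^ (M n)) * (((q:ℝ) ^ n)⁻¹) ^ (M n)
            * ((M n : ℝ) + 1) := by ring
  have hshift : ∀ n, ∑ k ∈ Finset.range (q ^ n), ((k:ℝ)+1) ^ (M n)
      = (∑ k ∈ Finset.range (q ^ n), (k:ℝ) ^ (M n)) + ((q:ℝ) ^ n) ^ (M n) := by
    intro n
    have h1 := Finset.sum_range_succ' (fun k => ((k:ℝ)) ^ (M n)) (q ^ n)
    have h2 := Finset.sum_range_succ (fun k => ((k:ℝ)) ^ (M n)) (q ^ n)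
    simp only [Nat.cast_zero, Nat.cast_add, Nat.cast_one,
      zero_pow (by have := hM1 n; omega : M n ≠ 0)] at h1 h2
    rw [h2] at h1
    rw [← hcastN n]
    linarith [h1]
  have hsup : ∀ n, s n ≤ ((q:ℝ) ^ n) / ((M n : ℝ) + 1) + 1 := by
    intro n
    have h1 := sum_pow_upper (q ^ n) (M n)
    rw [hcastN n] at h1
    have h2 : (∑ k ∈ Finset.range (q ^ n), (k:ℝ) ^ (M n))
        ≤ ((q:ℝ) ^ n) ^ (M n + 1) / ((M n : ℝ) + 1) :=
      (le_div_iff₀ (hLpos n)).2 (by linarith [h1])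
    rw [hfact n, hshift n]
    calc ((∑ k ∈ Finset.range (q ^ n), (k:ℝ) ^ (M n)) + ((q:ℝ) ^ n) ^ (M n))
          * (((q:ℝ) ^ n)⁻¹) ^ (M n)
        ≤ (((q:ℝ) ^ n) ^ (M n + 1) / ((M n : ℝ) + 1) + ((q:ℝ) ^ n) ^ (M n))
          * (((q:ℝ) ^ n)⁻¹) ^ (M n) := by
          apply mul_le_mul_of_nonneg_right (by linarith [h2]) (by positivity)
      _ = ((q:ℝ) ^ n) ^ (M n + 1) * (((q:ℝ) ^ n)⁻¹) ^ (M n) / ((M n : ℝ) + 1)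
            + ((q:ℝ) ^ n) ^ (M n) * (((q:ℝ) ^ n)⁻¹) ^ (M n) := by ring
      _ = ((q:ℝ) ^ n) / ((M n : ℝ) + 1) + 1 := by
          rw [hNL n, inv_pow, mul_inv_cancel₀ (by positivity)]
  have hspos : ∀ n, 0 < s n := fun n =>
    lt_of_lt_of_le (div_pos (hNpos n) (hLpos n)) (hslow n)
  -- floor bounds
  have hrpow_pos : ∀ n : ℕ, (0:ℝ) < (q:ℝ) ^ ((n:ℝ) * R) := fun n => Real.rpow_pos_of_pos hq0 _
  have hfl1 : ∀ n : ℕ, (q:ℝ) ^ ((n:ℝ) * R) ≤ (M n : ℝ) + 1 := by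
    intro n
    rw [hM n]
    exact (Nat.lt_floor_add_one _).le
  have hfl2 : ∀ n : ℕ, (M n : ℝ) ≤ (q:ℝ) ^ ((n:ℝ) * R) := by
    intro n
    rw [hM n]
    exact Nat.floor_le (Real.rpow_nonneg hq0.le _)
  have hrpow1 : ∀ n : ℕ, (1:ℝ) ≤ (q:ℝ) ^ ((n:ℝ) * R) := by
    intro n
    calc (1:ℝ) = (q:ℝ) ^ (0:ℝ) := (Real.rpow_zero _).symm
      _ ≤ _ := Real.rpow_le_rpow_of_exponent_le hq1.le (by positivity)
  -- M n + 1 ≤ q ^ n for n ≥ 1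
  have hMltN : ∀ n : ℕ, 1 ≤ n → (M n : ℝ) + 1 ≤ (q:ℝ) ^ n := by
    intro n hn
    have h1 : (q:ℝ) ^ ((n:ℝ) * R) < (q:ℝ) ^ ((n:ℝ) : ℝ) := by
      apply Real.rpow_lt_rpow_of_exponent_lt hq1
      have hn1 : (1:ℝ) ≤ (n:ℝ) := by exact_mod_cast hn
      nlinarith
    rw [Real.rpow_natCast] at h1
    have h2 : M n < q ^ n := by
      rw [hM n]
      rw [Nat.floor_lt (Real.rpow_nonneg hq0.le _)]
      rw [hcastN n]
      exact h1
    have := hcastN n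
    have h3 : (M n : ℝ) + 1 ≤ ((q ^ n : ℕ) : ℝ) := by exact_mod_cast h2
    linarith
  -- logarithmic bounds
  have hlogq : 0 < Real.log q := Real.log_pos hq1
  have hlogL1 : ∀ n : ℕ, (n:ℝ) * R * Real.log q ≤ Real.log ((M n : ℝ) + 1) := by
    intro n
    calc (n:ℝ) * R * Real.log q = Real.log ((q:ℝ) ^ ((n:ℝ) * R)) :=
          (Real.log_rpow hq0 _).symm
      _ ≤ _ := Real.log_le_log (hrpow_pos n) (hfl1 n)
  have hlogL2 : ∀ n : ℕ, Real.log ((M n : ℝ) + 1) ≤ Real.log 2 + (n:ℝ) * R * Real.log q := by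
    intro n
    calc Real.log ((M n : ℝ) + 1) ≤ Real.log (2 * (q:ℝ) ^ ((n:ℝ) * R)) := by
          apply Real.log_le_log (hLpos n)
          have := hfl2 n; have := hrpow1 n; linarith
      _ = Real.log 2 + (n:ℝ) * R * Real.log q := by
          rw [Real.log_mul two_ne_zero (hrpow_pos n).ne', Real.log_rpow hq0]
  have hlogN : ∀ n : ℕ, Real.log ((q:ℝ) ^ n) = (n:ℝ) * Real.log q := fun n => by rw [Real.log_pow]
  have hlogs_low : ∀ n : ℕ,
      (n:ℝ) * Real.log q - (n:ℝ) * R * Real.log q - Real.log 2 ≤ Real.log (s n) := by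
    intro n
    have h1 : Real.log ((q:ℝ) ^ n / ((M n : ℝ) + 1)) ≤ Real.log (s n) :=
      Real.log_le_log (div_pos (hNpos n) (hLpos n)) (hslow n)
    rw [Real.log_div (hNpos n).ne' (hLpos n).ne', hlogN n] at h1
    have := hlogL2 n
    linarith
  have hlogs_up : ∀ n : ℕ, 1 ≤ n →
      Real.log (s n) ≤ Real.log 2 + (n:ℝ) * Real.log q - (n:ℝ) * R * Real.log q := by
    intro n hn
    have hd1 : (1:ℝ) ≤ (q:ℝ) ^ n / ((M n : ℝ) + 1) :=
      (one_le_div (hLpos n)).2 (hMltN n hn)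
    have h0 : s n ≤ 2 * ((q:ℝ) ^ n / ((M n : ℝ) + 1)) := by
      have := hsup n; linarith
    have h1 : Real.log (s n) ≤ Real.log (2 * ((q:ℝ) ^ n / ((M n : ℝ) + 1))) :=
      Real.log_le_log (hspos n) h0
    rw [Real.log_mul two_ne_zero (by linarith : ((q:ℝ) ^ n / ((M n : ℝ) + 1)) ≠ 0),
      Real.log_div (hNpos n).ne' (hLpos n).ne', hlogN n] at h1
    have := hlogL1 n
    linarith
  -- the real rate sequence
  set x : ℕ → ℝ := fun n => (((n:ℝ) * Real.log q)⁻¹) * Real.log (s n) with hxdef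
  have hDpos : ∀ n : ℕ, 1 ≤ n → 0 < (n:ℝ) * Real.log q := by
    intro n hn
    have hn1 : (1:ℝ) ≤ (n:ℝ) := by exact_mod_cast hn
    nlinarith
  have hxlow : ∀ n : ℕ, 1 ≤ n →
      (1 - R) - Real.log 2 * ((n:ℝ) * Real.log q)⁻¹ ≤ x n := by
    intro n hn
    have hD := hDpos n hn
    have h1 := hlogs_low n
    rw [hxdef]
    have h2 : (((n:ℝ) * Real.log q)⁻¹)
        * ((n:ℝ) * Real.log q - (n:ℝ) * R * Real.log q - Real.log 2)
        ≤ (((n:ℝ) * Real.log q)⁻¹) * Real.log (s n) :=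
      mul_le_mul_of_nonneg_left h1 (by positivity)
    have h3 : (((n:ℝ) * Real.log q)⁻¹)
        * ((n:ℝ) * Real.log q - (n:ℝ) * R * Real.log q - Real.log 2)
        = (1 - R) - Real.log 2 * ((n:ℝ) * Real.log q)⁻¹ := by
      field_simp
    rw [h3] at h2
    exact h2
  have hxup : ∀ n : ℕ, 1 ≤ n →
      x n ≤ (1 - R) + Real.log 2 * ((n:ℝ) * Real.log q)⁻¹ := by
    intro n hn
    have hD := hDpos n hn
    have h1 := hlogs_up n hn
    rw [hxdef]
    have h2 : (((n:ℝ) * Real.log q)⁻¹) * Real.log (s n)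
        ≤ (((n:ℝ) * Real.log q)⁻¹)
        * (Real.log 2 + (n:ℝ) * Real.log q - (n:ℝ) * R * Real.log q) :=
      mul_le_mul_of_nonneg_left h1 (by positivity)
    have h3 : (((n:ℝ) * Real.log q)⁻¹)
        * (Real.log 2 + (n:ℝ) * Real.log q - (n:ℝ) * R * Real.log q)
        = (1 - R) + Real.log 2 * ((n:ℝ) * Real.log q)⁻¹ := by
      field_simp
      ring
    rw [h3] at h2
    exact h2
  -- convergence of the real rate sequence
  have htendInv : Tendsto (fun n : ℕ => ((n:ℝ) * Real.log q)⁻¹) atTop (𝓝 0) :=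
    (tendsto_natCast_atTop_atTop.atTop_mul_const hlogq).inv_tendsto_atTop
  have hxlim : Tendsto x atTop (𝓝 (1 - R)) := by
    apply tendsto_of_tendsto_of_tendsto_of_le_of_le'
      (g := fun n : ℕ => (1 - R) - Real.log 2 * ((n:ℝ) * Real.log q)⁻¹)
      (h := fun n : ℕ => (1 - R) + Real.log 2 * ((n:ℝ) * Real.log q)⁻¹)
    · simpa using tendsto_const_nhds.sub (htendInv.const_mul (Real.log 2))
    · simpa using tendsto_const_nhds.add (htendInv.const_mul (Real.log 2))
    · exact eventually_atTop.2 ⟨1, fun n hn => hxlow n hn⟩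
    · exact eventually_atTop.2 ⟨1, fun n hn => hxup n hn⟩
  -- conclude
  have hE0 : ∀ n, (∫⁻ ω, (U n ω : ℝ≥0∞) ∂μ) ≠ 0 := by
    intro n
    intro h
    have := hEtoReal n
    rw [h] at this
    simp at this
    exact (hspos n).ne' this.symm
  have hrate : ∀ n, rateSeq q (fun n => ∫⁻ ω, (U n ω : ℝ≥0∞) ∂μ) n = ((x n : ℝ) : EReal) := by
    intro n
    rw [rateSeq, ENNReal.log_pos_real (hE0 n) (hEtop n), hEtoReal n, hxdef]
    exact (EReal.coe_mul _ _).symm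
  have hfinal : Tendsto (fun n => ((x n : ℝ) : EReal)) atTop (𝓝 ((1 - R : ℝ) : EReal)) :=
    (EReal.tendsto_coe).2 hxlim
  exact hfinal.congr fun n => (hrate n).symm
end

section
/- (Simplified error exponent.) Let I : [0,1] → [0,∞] be convex with I(H) = 0 for some H ∈ (0,1), and suppose there exists x* ∈ (H,1) at which I is finite and differentiable with I′(x*) = 1; set H_{1/2} = x* − I(x*). Then for any R with H < 1 − R: if 1 − R > x* then inf_{a ∈ [H, 1−R]} { (1 − R − a) + I(a) } = 1 − R − H_{1/2}, while if 1 − R ≤ x* then inf_{a ∈ [H, 1−R]} { (1 − R − a) + I(a) } = I(1 − R). -/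
open Filter Set Topology

/-- Simplified error exponent.  Let `I : [0,1] → [0,∞]` be convex
with `I(H) = 0`, finite and differentiable at some `x* ∈ (H,1)` with `I′(x*) = 1`,
and set `H_{1/2} = x* - I(x*)`.  For `R` with `H < 1 - R`: if `1 - R > x*` then
`inf_{a ∈ [H,1-R]} ((1-R-a) + I(a)) = 1 - R - H_{1/2}`; if `1 - R ≤ x*` the infimum
is `I(1-R)`. -/
theorem grand_simplified_error_exponent
    (I : ℝ → EReal) (H : ℝ) (hH : H ∈ Set.Ioo (0:ℝ) 1)
    (hnn : ∀ x ∈ Set.Icc (0:ℝ) 1, 0 ≤ I x)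
    (hconv : ∀ x ∈ Set.Icc (0:ℝ) 1, ∀ y ∈ Set.Icc (0:ℝ) 1, ∀ a b : ℝ,
      0 ≤ a → 0 ≤ b → a + b = 1 →
      I (a * x + b * y) ≤ (a : EReal) * I x + (b : EReal) * I y)
    (hIH : I H = 0)
    (xs : ℝ) (hxs : xs ∈ Set.Ioo H 1) (hfin : I xs ≠ ⊤)
    (hderiv : HasDerivAt (fun x => (I x).toReal) 1 xs)
    (R : ℝ) (hR : R ∈ Set.Ioo (0:ℝ) 1) (hcap : H < 1 - R) :
    (xs < 1 - R →
      (⨅ a ∈ Set.Icc H (1 - R), (((1 - R - a : ℝ) : EReal) + I a)) =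
        ((1 - R - (xs - (I xs).toReal) : ℝ) : EReal)) ∧
    (1 - R ≤ xs →
      (⨅ a ∈ Set.Icc H (1 - R), (((1 - R - a : ℝ) : EReal) + I a)) = I (1 - R)) := by
  obtain ⟨hH0, hH1⟩ := hH
  obtain ⟨hxsH, hxs1⟩ := hxs
  obtain ⟨hR0, hR1⟩ := hR
  set g : ℝ → ℝ := fun x => (I x).toReal with hg
  have hsub : ∀ c : ℝ, c ≤ 1 → Set.Icc H c ⊆ Set.Icc (0:ℝ) 1 := by
    intro c hc x hx
    exact ⟨le_trans hH0.le hx.1, le_trans hx.2 hc⟩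
  -- finiteness of I on [H, c] whenever I c ≠ ⊤
  have hfin' : ∀ c : ℝ, H ≤ c → c ≤ 1 → I c ≠ ⊤ → ∀ x ∈ Set.Icc H c, I x ≠ ⊤ := by
    intro c hHc hc1 hcT x hx
    rcases eq_or_lt_of_le hHc with rfl | hlt
    · have : x = H := le_antisymm hx.2 hx.1
      rw [this, hIH]; simp
    · set t : ℝ := (x - H) / (c - H) with ht
      have hd : (0:ℝ) < c - H := by linarith
      have ht0 : 0 ≤ t := div_nonneg (by linarith [hx.1]) hd.le
      have ht1 : t ≤ 1 := (div_le_one hd).2 (by linarith [hx.2])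
      have hxrep : (1 - t) * H + t * c = x := by
        have : t * (c - H) = x - H := by
          rw [ht]; field_simp
        nlinarith [this]
      have hkey := hconv H ⟨hH0.le, hH1.le⟩ c ⟨by linarith, hc1⟩ (1 - t) t
        (by linarith) ht0 (by ring)
      rw [hxrep, hIH, mul_zero, zero_add] at hkey
      have hcfin : I c = ((g c : ℝ) : EReal) :=
        (EReal.coe_toReal hcT (ne_bot_of_le_ne_bot (by simp)
          (hnn c ⟨by linarith, hc1⟩))).symm
      rw [hcfin, ← EReal.coe_mul] at hkey
      exact ne_top_of_le_ne_top (EReal.coe_ne_top _) hkey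
  have hcoe : ∀ x : ℝ, x ∈ Set.Icc (0:ℝ) 1 → I x ≠ ⊤ → I x = ((g x : ℝ) : EReal) := by
    intro x hx hxT
    exact (EReal.coe_toReal hxT (ne_bot_of_le_ne_bot (by simp) (hnn x hx))).symm
  -- convexity of g on [H, c] whenever I c ≠ ⊤
  have hcvx : ∀ c : ℝ, H ≤ c → c ≤ 1 → I c ≠ ⊤ → ConvexOn ℝ (Set.Icc H c) g := by
    intro c hHc hc1 hcT
    refine ⟨convex_Icc H c, ?_⟩
    intro x hx y hy a b ha hb hab
    have hxy : a • x + b • y ∈ Set.Icc H c := (convex_Icc H c) hx hy ha hb hab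
    have h1 := hconv x (hsub c hc1 hx) y (hsub c hc1 hy) a b ha hb hab
    rw [hcoe x (hsub c hc1 hx) (hfin' c hHc hc1 hcT x hx),
        hcoe y (hsub c hc1 hy) (hfin' c hHc hc1 hcT y hy)] at h1
    rw [← EReal.coe_mul, ← EReal.coe_mul, ← EReal.coe_add] at h1
    have h2 : I (a • x + b • y) = ((g (a • x + b • y) : ℝ) : EReal) :=
      hcoe _ (hsub c hc1 hxy) (hfin' c hHc hc1 hcT _ hxy)
    have h3 : (a • x + b • y : ℝ) = a * x + b * y := by simp [smul_eq_mul]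
    rw [h3] at h2
    rw [h2] at h1
    simpa [smul_eq_mul] using EReal.coe_le_coe_iff.1 h1
  have hgcvx : ConvexOn ℝ (Set.Icc H xs) g := hcvx xs hxsH.le hxs1.le hfin
  -- key1 : chords to the left of xs have slope ≤ 1
  have key1 : ∀ a b : ℝ, H ≤ a → a ≤ b → b ≤ xs → g b - g a ≤ b - a := by
    intro a b haH hab hbxs
    rcases eq_or_lt_of_le hab with rfl | hab'
    · simp
    have hslope : slope g a b ≤ 1 := by
      rcases eq_or_lt_of_le hbxs with rfl | hbxs'
      · exact hgcvx.slope_le_of_hasDerivAt ⟨haH, hab⟩ ⟨le_trans haH hab, le_refl _⟩ hab' hderiv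
      · have h1 : slope g a b ≤ slope g a xs := by
          have hmono := hgcvx.slope_mono (x := a) ⟨haH, le_trans hab hbxs⟩
          exact hmono ⟨⟨le_trans haH hab, hbxs⟩, by simpa using hab'.ne'⟩
            ⟨⟨le_trans haH (le_trans hab hbxs), le_refl _⟩,
              by simpa using (lt_trans hab' hbxs').ne'⟩ hbxs'.le
        have h2 : slope g a xs ≤ 1 :=
          hgcvx.slope_le_of_hasDerivAt ⟨haH, le_trans hab hbxs⟩
            ⟨le_trans haH (le_trans hab hbxs), le_refl _⟩ (lt_of_lt_of_le hab' hbxs) hderiv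
        exact le_trans h1 h2
    rw [slope_def_field] at hslope
    have hd : (0:ℝ) < b - a := by linarith
    calc g b - g a = (g b - g a) / (b - a) * (b - a) := by field_simp
    _ ≤ 1 * (b - a) := by
        apply mul_le_mul_of_nonneg_right _ hd.le
        simpa [div_eq_iff hd.ne'] using hslope
    _ = b - a := by ring
  -- key2 : chords to the right of xs have slope ≥ 1
  have key2 : ∀ a : ℝ, xs < a → a ≤ 1 → I a ≠ ⊤ → a - xs ≤ g a - g xs := by
    intro a hxsa ha1 haT
    have hcva : ConvexOn ℝ (Set.Icc H a) g := hcvx a (le_trans hxsH.le hxsa.le) ha1 haT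
    have hslope : (1:ℝ) ≤ slope g xs a :=
      hcva.le_slope_of_hasDerivAt ⟨hxsH.le, hxsa.le⟩
        ⟨le_trans hxsH.le hxsa.le, le_refl _⟩ hxsa hderiv
    rw [slope_def_field] at hslope
    have hd : (0:ℝ) < a - xs := by linarith
    have := (le_div_iff₀ hd).1 hslope
    linarith
  set r : ℝ := 1 - R with hr
  have hr1 : r < 1 := by simp [hr]; linarith
  constructor
  · -- case xs < r
    intro hxr
    apply le_antisymm
    · -- inf ≤ value at xs
      have h1 : (⨅ a ∈ Set.Icc H r, (((r - a : ℝ) : EReal) + I a)) ≤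
          ((r - xs : ℝ) : EReal) + I xs := iInf₂_le xs ⟨hxsH.le, hxr.le⟩
      have h2 : ((r - xs : ℝ) : EReal) + I xs = ((r - (xs - g xs) : ℝ) : EReal) := by
        rw [hcoe xs ⟨hH0.le.trans hxsH.le, hxs1.le⟩ hfin, ← EReal.coe_add]
        congr 1
        ring
      exact h2 ▸ h1
    · apply le_iInf₂
      intro a ha
      by_cases haxs : a ≤ xs
      · have hfa : I a ≠ ⊤ := hfin' xs hxsH.le hxs1.le hfin a ⟨ha.1, haxs⟩
        rw [hcoe a (hsub r hr1.le ha) hfa, ← EReal.coe_add]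
        apply EReal.coe_le_coe_iff.2
        have := key1 a xs ha.1 haxs (le_refl _)
        linarith
      · push_neg at haxs
        by_cases haT : I a = ⊤
        · rw [haT, EReal.add_top_of_ne_bot (EReal.coe_ne_bot _)]
          exact le_top
        · rw [hcoe a (hsub r hr1.le ha) haT, ← EReal.coe_add]
          apply EReal.coe_le_coe_iff.2
          have := key2 a haxs (le_trans ha.2 hr1.le) haT
          linarith
  · -- case r ≤ xs
    intro hrxs
    have hIr : I r ≠ ⊤ := hfin' xs hxsH.le hxs1.le hfin r ⟨hcap.le, hrxs⟩
    apply le_antisymm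
    · have h1 : (⨅ a ∈ Set.Icc H r, (((r - a : ℝ) : EReal) + I a)) ≤
          ((r - r : ℝ) : EReal) + I r := iInf₂_le r ⟨hcap.le, le_refl _⟩
      have h2 : ((r - r : ℝ) : EReal) + I r = I r := by
        norm_num
      exact h2 ▸ h1
    · apply le_iInf₂
      intro a ha
      have hfa : I a ≠ ⊤ := hfin' xs hxsH.le hxs1.le hfin a ⟨ha.1, le_trans ha.2 hrxs⟩
      rw [hcoe a (hsub r hr1.le ha) hfa, hcoe r (hsub r hr1.le ⟨hcap.le, le_refl _⟩) hIr,
        ← EReal.coe_add]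
      apply EReal.coe_le_coe_iff.2
      have := key1 a r ha.1 ha.2 hrxs
      linarith
end

section
/- (Concentration on correct decodings conditioned on early termination.) Set D_n = min(G_n, U^n). If y ∈ (0, 1−R) is such that I^N(y) < I^U(y) = 1 − R − y, then the probability of a correct decoding given that the algorithm terminates within q^{ny} queries converges to one: lim_{n→∞} P(G_n < U^n | (1/n) log D_n ≤ y) = 1. Moreover, such a y necessarily exists whenever I^N(0) < 1 − R (i.e., whenever the code-book rate is less than one minus the min-entropy rate of the noise). -/
open MeasureTheory ProbabilityTheory Filter Set Topology
open scoped ENNReal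

/-- Concentration on correct decodings conditioned on early
termination: if `y ∈ (0, 1-R)` satisfies `I^N(y) < I^U(y) = 1 - R - y`, then
`P(Gₙ < Uⁿ | (1/n) log_q Dₙ ≤ y) → 1` where `Dₙ = min(Gₙ, Uⁿ)`; such a `y` exists
whenever `I^N(0) < 1 - R`. -/
theorem grand_conditional_concentration
    {Ω : Type*} [MeasurableSpace Ω] (μ : Measure Ω) [IsProbabilityMeasure μ]
    (q : ℕ) (hq : 2 ≤ q) (R : ℝ) (hR : R ∈ Set.Ioo (0:ℝ) 1)
    (M : ℕ → ℕ) (hM : ∀ n : ℕ, M n = ⌊(q : ℝ) ^ ((n : ℝ) * R)⌋₊)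
    (Un : (n : ℕ) → Fin (M n) → Ω → ℕ)
    (hUnmeas : ∀ n i, Measurable (Un n i))
    (hUnval : ∀ n i ω, Un n i ω ∈ Finset.Icc 1 (q ^ n))
    (hUnunif : ∀ n i, ∀ k ∈ Finset.Icc 1 (q ^ n), μ {ω | Un n i ω = k} = ((q : ℝ≥0∞) ^ n)⁻¹)
    (hUnindep : ∀ n, iIndepFun (Un n) μ)
    (U : ℕ → Ω → ℕ) (hU : ∀ n ω, U n ω = ⨅ i, Un n i ω)
    (G : ℕ → Ω → ℕ) (hGmeas : ∀ n, Measurable (G n))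
    (hGval : ∀ n ω, G n ω ∈ Finset.Icc 1 (q ^ n))
    (hGindep : ∀ n, IndepFun (G n) (fun ω i => Un n i ω) μ)
    (IN : ℝ → EReal) (H : ℝ) (hH : H ∈ Set.Ioo (0:ℝ) 1)
    (hINnn : ∀ x ∈ Set.Icc (0:ℝ) 1, 0 ≤ IN x)
    (hINconv : ∀ x ∈ Set.Icc (0:ℝ) 1, ∀ y ∈ Set.Icc (0:ℝ) 1, ∀ a b : ℝ,
      0 ≤ a → 0 ≤ b → a + b = 1 →
      IN (a * x + b * y) ≤ (a : EReal) * IN x + (b : EReal) * IN y)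
    (hINlsc : LowerSemicontinuousOn IN (Set.Icc 0 1))
    (hINcont : ContinuousOn IN {x | x ∈ Set.Icc (0:ℝ) 1 ∧ IN x ≠ ⊤})
    (hINzero : ∀ x ∈ Set.Icc (0:ℝ) 1, (IN x = 0 ↔ x = H))
    (hIN0 : IN 0 ≤ (H : EReal))
    (hLDlow : ∀ O : Set ℝ, IsOpen O →
      -(⨅ x ∈ O ∩ Set.Icc (0:ℝ) 1, IN x) ≤
        Filter.liminf
          (rateSeq q (fun n => μ {ω | (n : ℝ)⁻¹ * Real.logb q ((G n ω : ℝ)) ∈ O}))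
          Filter.atTop)
    (hLDup : ∀ F : Set ℝ, IsClosed F →
      Filter.limsup
          (rateSeq q (fun n => μ {ω | (n : ℝ)⁻¹ * Real.logb q ((G n ω : ℝ)) ∈ F}))
          Filter.atTop ≤
        -(⨅ x ∈ F ∩ Set.Icc (0:ℝ) 1, IN x))
    :
    (∀ y ∈ Set.Ioo (0:ℝ) (1 - R), IN y < ((1 - R - y : ℝ) : EReal) →
      Filter.Tendsto
        (fun n : ℕ =>
          μ ({ω | G n ω < U n ω} ∩
              {ω | (n : ℝ)⁻¹ * Real.logb q ((min (G n ω) (U n ω) : ℝ)) ≤ y}) /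
            μ {ω | (n : ℝ)⁻¹ * Real.logb q ((min (G n ω) (U n ω) : ℝ)) ≤ y})
        Filter.atTop (nhds (1 : ℝ≥0∞))) ∧
    (IN 0 < ((1 - R : ℝ) : EReal) →
      ∃ y ∈ Set.Ioo (0:ℝ) (1 - R), IN y < ((1 - R - y : ℝ) : EReal)) := by
  have hq1 : (1:ℝ) < q := by
    have : (2:ℝ) ≤ q := by exact_mod_cast hq
    linarith
  have hq0 : (0:ℝ) < q := by linarith
  have hH0 : (0:ℝ) < H := hH.1
  have hH1 : H < 1 := hH.2
  have hINH : IN H = 0 := (hINzero H ⟨hH0.le, hH1.le⟩).2 rfl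
  constructor
  · -- part 1
    intro y hy hINy
    obtain ⟨hy0, hy1R⟩ := hy
    have hR0 : (0:ℝ) < R := hR.1
    have hR1 : R < 1 := hR.2
    have hy1 : y < 1 := by linarith
    have hlogq : 0 < Real.log q := Real.log_pos hq1
    -- choose a point x₀ < y with small rate
    obtain ⟨x₀, hx₀0, hx₀y, hx₀IN⟩ :
        ∃ x₀, 0 ≤ x₀ ∧ x₀ < y ∧ IN x₀ < ((1 - R - y : ℝ) : EReal) := by
      rcases le_or_gt y H with hyH | hHy
      · -- y ≤ H : use convexity between 0 and y
        have hINy_ne_top : IN y ≠ ⊤ := by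
          intro h; rw [h] at hINy; exact absurd hINy (by simp)
        have hINy_ne_bot : IN y ≠ ⊥ := by
          intro h
          have := hINnn y ⟨hy0.le, hy1.le⟩
          rw [h] at this; exact absurd this (by simp)
        set w := (IN y).toReal with hwdef
        have hINyeq : IN y = (w : EReal) := (EReal.coe_toReal hINy_ne_top hINy_ne_bot).symm
        have hw0 : 0 ≤ w := by
          have := hINnn y ⟨hy0.le, hy1.le⟩
          rw [hINyeq] at this; exact_mod_cast this
        have hwW : w < 1 - R - y := by
          rw [hINyeq] at hINy; exact_mod_cast hINy
        set m := max (H - w) 0 with hmdef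
        have hm0 : 0 ≤ m := le_max_right _ _
        set t := (1 - R - y - w) / (2 * (m + 1)) with htdef
        have ht0 : 0 < t := by
          apply div_pos (by linarith) (by linarith)
        have ht1 : t < 1 := by
          rw [htdef, div_lt_one (by linarith)]
          nlinarith
        have hkey : t * (H - w) < 1 - R - y - w := by
          have h1 : t * (H - w) ≤ t * m := by
            apply mul_le_mul_of_nonneg_left (le_max_left _ _) ht0.le
          have h2 : t * m < 1 - R - y - w := by
            rw [htdef, div_mul_eq_mul_div, div_lt_iff₀ (by linarith)]
            nlinarith
          linarith
        refine ⟨(1 - t) * y, by nlinarith, by nlinarith, ?_⟩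
        have key := hINconv 0 ⟨le_refl 0, zero_le_one⟩ y ⟨hy0.le, hy1.le⟩ t (1 - t)
          ht0.le (by linarith) (by ring)
        rw [show t * 0 + (1 - t) * y = (1 - t) * y by ring] at key
        calc IN ((1 - t) * y) ≤ (t : EReal) * IN 0 + ((1 - t : ℝ) : EReal) * IN y := key
          _ ≤ (t : EReal) * (H : EReal) + ((1 - t : ℝ) : EReal) * (w : EReal) := by
              apply add_le_add
              · exact mul_le_mul_of_nonneg_left hIN0 (by exact_mod_cast ht0.le)
              · rw [hINyeq]
          _ = ((t * H + (1 - t) * w : ℝ) : EReal) := by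
              rw [← EReal.coe_mul, ← EReal.coe_mul, ← EReal.coe_add]
          _ < ((1 - R - y : ℝ) : EReal) := by
              apply EReal.coe_lt_coe_iff.2
              nlinarith
      · -- H < y
        refine ⟨H, hH0.le, hHy, ?_⟩
        rw [hINH]
        have : (0:ℝ) < 1 - R - y := by linarith
        exact_mod_cast this
    have hx₀1 : x₀ ≤ 1 := (hx₀y.trans hy1).le
    -- value v of the rate at x₀
    have hx₀nt : IN x₀ ≠ ⊤ := by
      intro h; rw [h] at hx₀IN; exact absurd hx₀IN (by simp)
    have hx₀nb : IN x₀ ≠ ⊥ := by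
      intro h
      have := hINnn x₀ ⟨hx₀0, hx₀1⟩
      rw [h] at this; exact absurd this (by simp)
    set v := (IN x₀).toReal with hvdef
    have hveq : IN x₀ = (v : EReal) := (EReal.coe_toReal hx₀nt hx₀nb).symm
    have hv0 : 0 ≤ v := by
      have := hINnn x₀ ⟨hx₀0, hx₀1⟩; rw [hveq] at this; exact_mod_cast this
    have hvW : v < 1 - R - y := by rw [hveq] at hx₀IN; exact_mod_cast hx₀IN
    set δ := (1 - R - y - v) / 2 with hδdef
    have hδ0 : 0 < δ := by rw [hδdef]; linarith
    -- the LDP lower bound along (-∞, y)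
    have hlim := hLDlow (Set.Iio y) isOpen_Iio
    have hinf_le : (⨅ x ∈ Set.Iio y ∩ Set.Icc (0:ℝ) 1, IN x) ≤ IN x₀ := by
      exact iInf₂_le x₀ ⟨hx₀y, hx₀0, hx₀1⟩
    have h1 : ((-(v + δ) : ℝ) : EReal) <
        Filter.liminf
          (rateSeq q (fun n => μ {ω | (n : ℝ)⁻¹ * Real.logb q ((G n ω : ℝ)) ∈ Set.Iio y}))
          Filter.atTop := by
      refine lt_of_lt_of_le ?_ hlim
      have h2 : -(IN x₀) ≤ -(⨅ x ∈ Set.Iio y ∩ Set.Icc (0:ℝ) 1, IN x) :=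
        EReal.neg_le_neg_iff.2 hinf_le
      refine lt_of_lt_of_le ?_ h2
      rw [hveq, ← EReal.coe_neg]
      apply EReal.coe_lt_coe_iff.2
      linarith
    have hev1 := Filter.eventually_lt_of_lt_liminf h1
    -- basic bounds on G and U
    have hG1 : ∀ n ω, 1 ≤ G n ω := fun n ω => (Finset.mem_Icc.1 (hGval n ω)).1
    have hM1 : ∀ n, 1 ≤ M n := by
      intro n
      rw [hM n]
      apply Nat.le_floor
      rw [Nat.cast_one]
      exact Real.one_le_rpow hq1.le (mul_nonneg (Nat.cast_nonneg n) hR0.le)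
    have hU1 : ∀ n ω, 1 ≤ U n ω := by
      intro n ω
      rw [hU n ω]
      haveI : Nonempty (Fin (M n)) := Fin.pos_iff_nonempty.mp (hM1 n)
      exact le_ciInf fun i => (Finset.mem_Icc.1 (hUnval n i ω)).1
    -- name the key sets
    set Bset : ℕ → Set Ω := fun n : ℕ =>
      {ω | (n : ℝ)⁻¹ * Real.logb q ((min (G n ω) (U n ω) : ℝ)) ≤ y} with hBset
    set Aset : ℕ → Set Ω := fun n => {ω | G n ω < U n ω} with hAset
    set Cset : ℕ → Set Ω := fun n => {ω | ¬ G n ω < U n ω} ∩ Bset n with hCset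
    -- inclusion: {rate G < y} ⊆ Bset n
    have hsub1 : ∀ n : ℕ,
        {ω | (n : ℝ)⁻¹ * Real.logb q ((G n ω : ℝ)) ∈ Set.Iio y} ⊆ Bset n := by
      intro n ω hω
      simp only [Set.mem_setOf_eq, Set.mem_Iio] at hω
      simp only [hBset, Set.mem_setOf_eq]
      have hmin1 : (1:ℝ) ≤ min ((G n ω : ℕ) : ℝ) ((U n ω : ℕ) : ℝ) := by
        apply le_min
        · exact_mod_cast hG1 n ω
        · exact_mod_cast hU1 n ω
      have hlogb : Real.logb q (min ((G n ω : ℕ) : ℝ) ((U n ω : ℕ) : ℝ)) ≤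
          Real.logb q ((G n ω : ℕ) : ℝ) :=
        Real.logb_le_logb_of_le hq1 (by linarith) (min_le_left _ _)
      have := mul_le_mul_of_nonneg_left hlogb (inv_nonneg.2 (Nat.cast_nonneg n))
      exact le_of_lt (lt_of_le_of_lt this hω)
    -- eventual lower bound on the denominator
    have hdenom : ∀ᶠ n : ℕ in Filter.atTop,
        ENNReal.ofReal (Real.exp (-(v + δ) * ((n:ℝ) * Real.log q))) ≤ μ (Bset n) := by
      filter_upwards [hev1, Filter.eventually_ge_atTop 1] with n hn hn1
      have hc : (0:ℝ) < (n:ℝ) * Real.log q := by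
        apply mul_pos _ hlogq
        exact_mod_cast Nat.lt_of_lt_of_le Nat.zero_lt_one hn1
      have hb : ENNReal.ofReal (Real.exp (-(v + δ) * ((n:ℝ) * Real.log q))) ≤
          μ {ω | (n : ℝ)⁻¹ * Real.logb q ((G n ω : ℝ)) ∈ Set.Iio y} := by
        rw [← ENNReal.log_le_log_iff, ENNReal.log_ofReal_of_pos (Real.exp_pos _),
          Real.log_exp]
        have hdiv : rateSeq q
            (fun n => μ {ω | (n : ℝ)⁻¹ * Real.logb q ((G n ω : ℝ)) ∈ Set.Iio y}) n =
            ENNReal.log (μ {ω | (n : ℝ)⁻¹ * Real.logb q ((G n ω : ℝ)) ∈ Set.Iio y}) /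
              (((n:ℝ) * Real.log q : ℝ) : EReal) := by
          rw [rateSeq, EReal.coe_inv, mul_comm]
          rfl
        rw [hdiv] at hn
        have := (EReal.le_div_iff_mul_le (by exact_mod_cast hc) (EReal.coe_ne_top _)).1 hn.le
        rw [← EReal.coe_mul] at this
        exact this
      exact hb.trans (measure_mono (hsub1 n))
    -- eventual upper bound on the "wrong decoding" part of the numerator
    have hnum : ∀ᶠ n in Filter.atTop,
        μ (Cset n) ≤ ENNReal.ofReal ((q:ℝ) ^ ((n:ℝ) * (R + y - 1))) := by
      filter_upwards [Filter.eventually_ge_atTop 1] with n hn1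
      set T := ⌊(q:ℝ) ^ ((n:ℝ) * y)⌋₊ with hT
      have hsub : Cset n ⊆ {ω | U n ω ≤ T} := by
        rintro ω ⟨h1, h2⟩
        simp only [Set.mem_setOf_eq] at h1
        simp only [hBset, Set.mem_setOf_eq] at h2
        have hUG : ((U n ω : ℕ) : ℝ) ≤ ((G n ω : ℕ) : ℝ) := by
          exact_mod_cast not_lt.1 h1
        rw [min_eq_right hUG] at h2
        have hn0 : (0:ℝ) < (n:ℝ) := by exact_mod_cast Nat.lt_of_lt_of_le Nat.zero_lt_one hn1
        have hlog : Real.logb q ((U n ω : ℕ) : ℝ) ≤ (n:ℝ) * y := by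
          rwa [inv_mul_le_iff₀ hn0] at h2
        have hU0 : (0:ℝ) < ((U n ω : ℕ) : ℝ) := by exact_mod_cast hU1 n ω
        have hle := (Real.logb_le_iff_le_rpow hq1 hU0).1 hlog
        exact Nat.le_floor hle
      have hsingle : ∀ i : Fin (M n),
          μ {ω | Un n i ω ≤ T} ≤ (T : ℝ≥0∞) * ((q : ℝ≥0∞) ^ n)⁻¹ := by
        intro i
        have hsub2 : {ω | Un n i ω ≤ T} ⊆
            ⋃ k ∈ Finset.Icc 1 (min T (q ^ n)), {ω | Un n i ω = k} := by
          intro ω hω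
          have hval := Finset.mem_Icc.1 (hUnval n i ω)
          exact Set.mem_biUnion (Finset.mem_Icc.2 ⟨hval.1, le_min hω hval.2⟩) rfl
        calc μ {ω | Un n i ω ≤ T}
            ≤ ∑ k ∈ Finset.Icc 1 (min T (q ^ n)), μ {ω | Un n i ω = k} :=
              (measure_mono hsub2).trans (measure_biUnion_finset_le _ _)
          _ = ∑ _k ∈ Finset.Icc 1 (min T (q ^ n)), ((q : ℝ≥0∞) ^ n)⁻¹ := by
              refine Finset.sum_congr rfl fun k hk => ?_
              have hk' := Finset.mem_Icc.1 hk
              exact hUnunif n i k (Finset.mem_Icc.2 ⟨hk'.1, hk'.2.trans (min_le_right _ _)⟩)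
          _ = ((Finset.Icc 1 (min T (q ^ n))).card : ℝ≥0∞) * ((q : ℝ≥0∞) ^ n)⁻¹ := by
              rw [Finset.sum_const, nsmul_eq_mul]
          _ ≤ (T : ℝ≥0∞) * ((q : ℝ≥0∞) ^ n)⁻¹ := by
              apply mul_le_mul_left
              have : (Finset.Icc 1 (min T (q ^ n))).card ≤ T := by
                rw [Nat.card_Icc]
                omega
              exact_mod_cast Nat.cast_le.2 this
      have hUnion : μ {ω | U n ω ≤ T} ≤ ∑' i : Fin (M n), μ {ω | Un n i ω ≤ T} := by
        refine (measure_mono ?_).trans (measure_iUnion_le _)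
        intro ω hω
        haveI : Nonempty (Fin (M n)) := Fin.pos_iff_nonempty.mp (hM1 n)
        have hmem : (⨅ i, Un n i ω) ∈ Set.range (fun i => Un n i ω) := by
          rw [← sInf_range]
          exact Nat.sInf_mem (Set.range_nonempty _)
        obtain ⟨i, hi⟩ := hmem
        refine Set.mem_iUnion.2 ⟨i, ?_⟩
        simp only [Set.mem_setOf_eq] at hω ⊢
        rw [hU n ω] at hω
        have hi' : Un n i ω = ⨅ j, Un n j ω := hi
        rw [hi']
        exact hω
      have hcount : μ (Cset n) ≤ (M n : ℝ≥0∞) * ((T : ℝ≥0∞) * ((q : ℝ≥0∞) ^ n)⁻¹) := by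
        calc μ (Cset n) ≤ μ {ω | U n ω ≤ T} := measure_mono hsub
          _ ≤ ∑' i : Fin (M n), μ {ω | Un n i ω ≤ T} := hUnion
          _ ≤ ∑' _i : Fin (M n), ((T : ℝ≥0∞) * ((q : ℝ≥0∞) ^ n)⁻¹) :=
              ENNReal.tsum_le_tsum hsingle
          _ = (M n : ℝ≥0∞) * ((T : ℝ≥0∞) * ((q : ℝ≥0∞) ^ n)⁻¹) := by
              rw [tsum_fintype, Finset.sum_const, nsmul_eq_mul]
              simp
      refine hcount.trans ?_
      -- convert everything to `ofReal` of real powers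
      have hMle : (M n : ℝ≥0∞) ≤ ENNReal.ofReal ((q:ℝ) ^ ((n:ℝ) * R)) := by
        rw [← ENNReal.ofReal_natCast]
        apply ENNReal.ofReal_le_ofReal
        rw [hM n]
        exact Nat.floor_le (Real.rpow_nonneg hq0.le _)
      have hTle : (T : ℝ≥0∞) ≤ ENNReal.ofReal ((q:ℝ) ^ ((n:ℝ) * y)) := by
        rw [← ENNReal.ofReal_natCast]
        apply ENNReal.ofReal_le_ofReal
        exact Nat.floor_le (Real.rpow_nonneg hq0.le _)
      have hqpow : ((q : ℝ≥0∞) ^ n)⁻¹ = ENNReal.ofReal (((q:ℝ) ^ n)⁻¹) := by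
        rw [ENNReal.ofReal_inv_of_pos (by positivity), ENNReal.ofReal_pow hq0.le,
          ENNReal.ofReal_natCast]
      calc (M n : ℝ≥0∞) * ((T : ℝ≥0∞) * ((q : ℝ≥0∞) ^ n)⁻¹)
          ≤ ENNReal.ofReal ((q:ℝ) ^ ((n:ℝ) * R)) *
            (ENNReal.ofReal ((q:ℝ) ^ ((n:ℝ) * y)) * ENNReal.ofReal (((q:ℝ) ^ n)⁻¹)) := by
            rw [hqpow]
            exact mul_le_mul' hMle (mul_le_mul' hTle le_rfl)
        _ = ENNReal.ofReal ((q:ℝ) ^ ((n:ℝ) * R) * ((q:ℝ) ^ ((n:ℝ) * y) * ((q:ℝ) ^ n)⁻¹)) := by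
            rw [ENNReal.ofReal_mul (Real.rpow_nonneg hq0.le _),
              ENNReal.ofReal_mul (Real.rpow_nonneg hq0.le _)]
        _ = ENNReal.ofReal ((q:ℝ) ^ ((n:ℝ) * (R + y - 1))) := by
            congr 1
            rw [← Real.rpow_natCast (q:ℝ) n, ← Real.rpow_neg hq0.le,
              ← Real.rpow_add hq0, ← Real.rpow_add hq0]
            congr 1
            ring
    -- the ratio of wrong decodings tends to zero
    set ρ : ℝ≥0∞ := ENNReal.ofReal ((q:ℝ) ^ (-δ)) with hρ
    have hρ1 : ρ < 1 := by
      rw [hρ, ← ENNReal.ofReal_one]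
      exact ENNReal.ofReal_lt_ofReal_iff_of_nonneg (Real.rpow_nonneg hq0.le _) |>.2
        (Real.rpow_lt_one_of_one_lt_of_neg hq1 (by linarith))
    have hrle : ∀ᶠ n in Filter.atTop, μ (Cset n) / μ (Bset n) ≤ ρ ^ n := by
      filter_upwards [hdenom, hnum] with n hd hnu
      calc μ (Cset n) / μ (Bset n)
          ≤ ENNReal.ofReal ((q:ℝ) ^ ((n:ℝ) * (R + y - 1))) /
            ENNReal.ofReal (Real.exp (-(v + δ) * ((n:ℝ) * Real.log q))) :=
            ENNReal.div_le_div hnu hd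
        _ = ρ ^ n := by
            have hexp : Real.exp (-(v + δ) * ((n:ℝ) * Real.log q)) =
                (q:ℝ) ^ ((n:ℝ) * (-(v + δ))) := by
              rw [Real.rpow_def_of_pos hq0]
              congr 1
              ring
            rw [hexp, ← ENNReal.ofReal_div_of_pos (Real.rpow_pos_of_pos hq0 _),
              ← Real.rpow_sub hq0]
            have hexp2 : (n:ℝ) * (R + y - 1) - (n:ℝ) * (-(v + δ)) = (-δ) * (n:ℝ) := by
              rw [hδdef]; ring
            rw [hexp2, Real.rpow_mul hq0.le, Real.rpow_natCast, hρ,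
              ENNReal.ofReal_pow (Real.rpow_nonneg hq0.le _)]
    have hr0 : Filter.Tendsto (fun n => μ (Cset n) / μ (Bset n)) Filter.atTop (nhds 0) := by
      refine tendsto_of_tendsto_of_tendsto_of_le_of_le' tendsto_const_nhds
        (ENNReal.tendsto_pow_atTop_nhds_zero_of_lt_one hρ1)
        (Filter.Eventually.of_forall fun n => zero_le) hrle
    -- decomposition of Bset and final squeeze
    have hDleq : ∀ n, μ (Bset n) ≤ μ (Aset n ∩ Bset n) + μ (Cset n) := by
      intro n
      refine (measure_mono ?_).trans (measure_union_le _ _)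
      intro ω hω
      by_cases h : G n ω < U n ω
      · exact Or.inl ⟨h, hω⟩
      · exact Or.inr ⟨h, hω⟩
    have hupper : ∀ n, μ (Aset n ∩ Bset n) / μ (Bset n) ≤ 1 := fun n =>
      ENNReal.div_le_of_le_mul (by rw [one_mul]; exact measure_mono Set.inter_subset_right)
    have hlow : ∀ᶠ n in Filter.atTop,
        1 - μ (Cset n) / μ (Bset n) ≤ μ (Aset n ∩ Bset n) / μ (Bset n) := by
      filter_upwards [hdenom] with n hd
      have hD0 : μ (Bset n) ≠ 0 := by
        intro h
        rw [h, le_zero_iff, ENNReal.ofReal_eq_zero] at hd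
        exact absurd hd (not_le.2 (Real.exp_pos _))
      have hDt : μ (Bset n) ≠ ⊤ := measure_ne_top μ _
      rw [ENNReal.le_div_iff_mul_le (Or.inl hD0) (Or.inl hDt),
        ENNReal.sub_mul (fun _ _ => hDt), one_mul, ENNReal.div_mul_cancel hD0 hDt]
      exact tsub_le_iff_right.2 (hDleq n)
    have h1r : Filter.Tendsto (fun n => 1 - μ (Cset n) / μ (Bset n))
        Filter.atTop (nhds 1) := by
      have := ENNReal.Tendsto.sub (tendsto_const_nhds (x := (1:ℝ≥0∞)) (f := Filter.atTop))
        hr0 (Or.inl ENNReal.one_ne_top)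
      simpa using this
    exact tendsto_of_tendsto_of_tendsto_of_le_of_le' h1r tendsto_const_nhds hlow
      (Filter.Eventually.of_forall hupper)
  · -- part 2 : existence of a suitable y
    intro h0
    have hIN0nt : IN 0 ≠ ⊤ := by
      intro h; rw [h] at hIN0; exact absurd hIN0 (by simp)
    have hIN0nb : IN 0 ≠ ⊥ := by
      intro h
      have := hINnn 0 ⟨le_refl 0, zero_le_one⟩
      rw [h] at this; exact absurd this (by simp)
    set c := (IN 0).toReal with hcdef
    have hIN0eq : IN 0 = (c : EReal) := (EReal.coe_toReal hIN0nt hIN0nb).symm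
    have hc0 : 0 ≤ c := by
      have := hINnn 0 ⟨le_refl 0, zero_le_one⟩
      rw [hIN0eq] at this; exact_mod_cast this
    have hcR : c < 1 - R := by
      rw [hIN0eq] at h0; exact_mod_cast h0
    set y := min H (1 - R - c) / 2 with hydef
    have hy0 : 0 < y := by
      rw [hydef]
      apply div_pos (lt_min hH0 (by linarith)) zero_lt_two
    have hyH : y < H := by
      have h := min_le_left H (1 - R - c)
      rw [hydef]; linarith
    have hy1R : y < 1 - R := by
      have h := min_le_right H (1 - R - c)
      rw [hydef]; linarith
    have hyc : c < 1 - R - y := by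
      have h := min_le_right H (1 - R - c)
      rw [hydef]; linarith
    refine ⟨y, ⟨hy0, hy1R⟩, ?_⟩
    set b := y / H with hbdef
    have hb0 : 0 < b := div_pos hy0 hH0
    have hb1 : b < 1 := (div_lt_one hH0).2 hyH
    have key := hINconv 0 ⟨le_refl 0, zero_le_one⟩ H ⟨hH0.le, hH1.le⟩ (1 - b) b
      (by linarith) hb0.le (by ring)
    have hyeq : (1 - b) * 0 + b * H = y := by
      rw [hbdef]; field_simp; ring
    rw [hyeq, hINH, hIN0eq, mul_zero, add_zero] at key
    calc IN y ≤ ((1 - b : ℝ) : EReal) * ((c : ℝ) : EReal) := key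
      _ = (((1 - b) * c : ℝ) : EReal) := (EReal.coe_mul _ _).symm
      _ < ((1 - R - y : ℝ) : EReal) := by
          apply EReal.coe_lt_coe_iff.2
          nlinarith
end
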